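/- Region growing for the multicut LP metrics: in the subdivided LP setup, for every S ⊆ V, every z ∈ V, and every α ∈ (0,1), setting q = ⌈(k−1)/α⌉, there exists ρ₁ ∈ [0,1) such that both c^q(∂(ρ₁)) ≤ (2/(1−α)) · Vol(ρ₁) · ln( e·V^x(S)/Vol(ρ₁) ) · ln ln( e(r+1) ) and c^q(∂(ρ₁)) ≤ (2/(1−α)) · cVol(ρ₁) · ln( e·V^x(S)/cVol(ρ₁) ) · ln ln( e(r+1) ). -/

import Mathlib

open scoped Classical

namespace SubdividedLP

variable {V : Type*}

/-- The smaller of the two values of `g` at the endpoints of an edge. -/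
noncomputable def dmin (g : V → ℝ) : Sym2 V → ℝ :=
  Sym2.lift ⟨fun a b => min (g a) (g b), fun a b => min_comm _ _⟩

/-- The larger of the two values of `g` at the endpoints of an edge. -/
noncomputable def dmax (g : V → ℝ) : Sym2 V → ℝ :=
  Sym2.lift ⟨fun a b => max (g a) (g b), fun a b => max_comm _ _⟩

/-- The value `ℓ(u,v)` of a symmetric function `ℓ` on an edge `{u,v}` (written in a
symmetrized form so that it is well defined on `Sym2 V`; it equals `ℓ u v` whenever
`ℓ` is symmetric). -/
noncomputable def elen (ℓ : V → V → ℝ) : Sym2 V → ℝ :=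
  Sym2.lift ⟨fun a b => (ℓ a b + ℓ b a) / 2, fun a b => by dsimp only; rw [add_comm]⟩

/-- The ball `B^S(z,ρ)` (w.r.t. the distance function `g = ℓ(z,·)`). -/
noncomputable def ball (g : V → ℝ) (S : Finset V) (ρ : ℝ) : Finset V :=
  S.filter fun v => g v ≤ ρ

/-- The boundary `∂(ρ)`: edges of `G` with both endpoints in `S`, exactly one of which
is in the ball of radius `ρ` (equivalently, `min` of the endpoint distances is `≤ ρ`
and `max` is `> ρ`). -/
noncomputable def bdry [Fintype V] [DecidableEq V] (G : SimpleGraph V) [DecidableRel G.Adj]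
    (g : V → ℝ) (S : Finset V) (ρ : ℝ) : Finset (Sym2 V) :=
  G.edgeFinset.filter fun e => (∀ w ∈ e, w ∈ S) ∧ dmin g e ≤ ρ ∧ ρ < dmax g e

/-- The volume `𝒱^{S,x}(z,ρ)`: `β` plus the contribution `c_e·ℓ(u,v)` of the `F`-edges
inside the ball, plus `c_e·(ρ - ℓ(z,u))` for each `F`-edge crossing the boundary
(`u` being its endpoint inside the ball). -/
noncomputable def vol [Fintype V] [DecidableEq V] (G : SimpleGraph V) [DecidableRel G.Adj]
    (c : Sym2 V → ℝ) (ℓ : V → V → ℝ) (F : Finset (Sym2 V)) (S : Finset V) (z : V)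
    (β ρ : ℝ) : ℝ :=
  β + ∑ e ∈ F.filter (fun e => ∀ w ∈ e, w ∈ ball (ℓ z) S ρ), c e * elen ℓ e
    + ∑ e ∈ bdry G (ℓ z) S ρ ∩ F, c e * (ρ - dmin (ℓ z) e)

/-- The complementary volume `𝒱̄^{S,x}(z,ρ)`. -/
noncomputable def cvol [Fintype V] [DecidableEq V] (G : SimpleGraph V) [DecidableRel G.Adj]
    (c : Sym2 V → ℝ) (ℓ : V → V → ℝ) (F : Finset (Sym2 V)) (S : Finset V) (z : V)
    (β ρ : ℝ) : ℝ :=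
  β + ∑ e ∈ F.filter (fun e => ∀ w ∈ e, w ∈ S ∧ w ∉ ball (ℓ z) S ρ), c e * elen ℓ e
    + ∑ e ∈ bdry G (ℓ z) S ρ ∩ F, c e * (dmax (ℓ z) e - ρ)

/-- `𝒱^x(S) = β + Σ_{e ∈ E(S)} c_e x_e`. -/
noncomputable def Vx [Fintype V] [DecidableEq V] (G : SimpleGraph V) [DecidableRel G.Adj]
    (c x : Sym2 V → ℝ) (S : Finset V) (β : ℝ) : ℝ :=
  β + ∑ e ∈ G.edgeFinset.filter (fun e => ∀ w ∈ e, w ∈ S), c e * x e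

/-- `c^q(A)`: the total cost of all but the `q-1` most expensive edges of `A`
(equivalently, the minimum cost of a subset of `A` of size `|A| - (q-1)`);
it is `0` if `|A| < q`. -/
noncomputable def cq (c : Sym2 V → ℝ) (q : ℕ) (A : Finset (Sym2 V)) : ℝ :=
  if A.card < q then 0
  else sInf ((fun B : Finset (Sym2 V) => ∑ e ∈ B, c e) ''
    {B : Finset (Sym2 V) | B ⊆ A ∧ B.card + (q - 1) = A.card})

noncomputable def Gf (W u : ℝ) : ℝ := Real.log (Real.log (Real.exp 1 * W / u))
noncomputable def hf (W u : ℝ) : ℝ := u * Real.log (Real.exp 1 * W / u)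

lemma log_ge_one {W u : ℝ} (hu : 0 < u) (huW : u ≤ W) :
    1 ≤ Real.log (Real.exp 1 * W / u) := by
  have h1 : Real.exp 1 ≤ Real.exp 1 * W / u := by
    rw [le_div_iff₀ hu]
    have := Real.exp_pos 1
    nlinarith
  calc (1:ℝ) = Real.log (Real.exp 1) := (Real.log_exp 1).symm
    _ ≤ _ := Real.log_le_log (Real.exp_pos 1) h1

lemma hf_pos {W u : ℝ} (hu : 0 < u) (huW : u ≤ W) : 0 < hf W u := by
  have := log_ge_one hu huW
  have : (0:ℝ) < Real.log (Real.exp 1 * W / u) := by linarith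
  exact mul_pos hu this

lemma hf_le {W u v : ℝ} (hu : 0 < u) (huv : u ≤ v) (hvW : v ≤ W) :
    hf W u ≤ hf W v := by
  have hW : 0 < W := lt_of_lt_of_le (lt_of_lt_of_le hu huv) hvW
  -- hf W u = u * log (e*W) - u * log u on positives
  have key : ∀ w : ℝ, 0 < w → hf W w = w * Real.log (Real.exp 1 * W) - w * Real.log w := by
    intro w hw
    rw [hf, Real.log_div (by positivity) (ne_of_gt hw)]
    ring
  rw [key u hu, key v (lt_of_lt_of_le hu huv)]
  set A := Real.log (Real.exp 1 * W)
  have hder : ∀ w ∈ interior (Set.Icc (0:ℝ) W), HasDerivAt (fun w : ℝ => w * A - w * Real.log w) (A - (Real.log w + 1)) w := by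
    intro w hw
    rw [interior_Icc] at hw
    have h1 : HasDerivAt (fun w : ℝ => w * A) A w := by
      simpa using (hasDerivAt_id w).mul_const A
    exact h1.sub (Real.hasDerivAt_mul_log (ne_of_gt hw.1))
  have hmono : MonotoneOn (fun w : ℝ => w * A - w * Real.log w) (Set.Icc 0 W) := by
    apply monotoneOn_of_deriv_nonneg (convex_Icc 0 W)
    · exact (Continuous.continuousOn (by continuity)).sub Real.continuous_mul_log.continuousOn
    · intro w hw
      exact (hder w hw).differentiableAt.differentiableWithinAt
    · intro w hw
      rw [(hder w hw).deriv]
      rw [interior_Icc] at hw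
      have : Real.log w ≤ Real.log W := Real.log_le_log hw.1 hw.2.le
      have hA : A = 1 + Real.log W := by
        simp only [A]
        rw [Real.log_mul (by positivity) (ne_of_gt hW), Real.log_exp]
      linarith
  exact hmono (Set.mem_Icc.2 ⟨hu.le, le_trans huv hvW⟩) (Set.mem_Icc.2 ⟨(lt_of_lt_of_le hu huv).le, hvW⟩) huv


lemma Gf_eq {W u : ℝ} (hW : 0 < W) (hu : 0 < u) :
    Gf W u = Real.log (Real.log (Real.exp 1 * W) - Real.log u) := by
  rw [Gf, Real.log_div (by positivity) (ne_of_gt hu)]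

lemma Gf_key {W v v' : ℝ} (hv : 0 < v) (hvv : v ≤ v') (hvW : v' ≤ W) :
    (v' - v) / hf W v' ≤ Gf W v - Gf W v' := by
  have hW : 0 < W := lt_of_lt_of_le (lt_of_lt_of_le hv hvv) hvW
  rcases eq_or_lt_of_le hvv with rfl | hlt
  · simp
  set A := Real.log (Real.exp 1 * W) with hA
  have hApos : ∀ w : ℝ, 0 < w → w ≤ W → 0 < A - Real.log w := by
    intro w hw hwW
    have h1 : 1 ≤ Real.log (Real.exp 1 * W / w) := log_ge_one hw hwW
    rw [Real.log_div (by positivity) (ne_of_gt hw)] at h1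
    linarith
  have hder : ∀ w : ℝ, 0 < w → w ≤ W →
      HasDerivAt (fun u : ℝ => Real.log (A - Real.log u)) (-(w * (A - Real.log w))⁻¹) w := by
    intro w hw hwW
    have hinner : HasDerivAt (fun u : ℝ => A - Real.log u) (-w⁻¹) w := by
      have h := (hasDerivAt_const w A).sub (Real.hasDerivAt_log (ne_of_gt hw))
      rw [zero_sub] at h
      exact h
    have houter := (Real.hasDerivAt_log (ne_of_gt (hApos w hw hwW))).comp w hinner
    refine houter.congr_deriv ?_
    rw [mul_inv]
    ring
  have hcont : ContinuousOn (fun u : ℝ => Real.log (A - Real.log u)) (Set.Icc v v') := by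
    intro w hw
    exact ((hder w (lt_of_lt_of_le hv hw.1) (le_trans hw.2 hvW)).continuousAt).continuousWithinAt
  obtain ⟨ξ, hξ, hslope⟩ := exists_hasDerivAt_eq_slope (fun u : ℝ => Real.log (A - Real.log u))
    (fun u => -(u * (A - Real.log u))⁻¹) hlt hcont
    (fun w hw => hder w (lt_trans hv hw.1) (le_trans hw.2.le hvW))
  have hξ0 : 0 < ξ := lt_trans hv hξ.1
  have hξW : ξ ≤ W := le_trans hξ.2.le hvW
  have hhfξ : hf W ξ = ξ * (A - Real.log ξ) := by
    rw [hf, Real.log_div (by positivity) (ne_of_gt hξ0)]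
  have hGv : Gf W v = Real.log (A - Real.log v) := Gf_eq hW hv
  have hGv' : Gf W v' = Real.log (A - Real.log v') := Gf_eq hW (lt_of_lt_of_le hv hvv)
  have hdiff : Gf W v - Gf W v' = (v' - v) / hf W ξ := by
    rw [hGv, hGv', hhfξ]
    have h2 : Real.log (A - Real.log v') - Real.log (A - Real.log v)
        = (v' - v) * -(ξ * (A - Real.log ξ))⁻¹ := by
      rw [hslope, mul_comm, div_mul_cancel₀]
      exact ne_of_gt (by linarith)
    rw [div_eq_mul_inv]
    linear_combination -h2
  rw [hdiff]
  gcongr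
  · exact hf_pos hξ0 hξW
  · exact hf_le hξ0 hξ.2.le hvW

lemma Gf_anti {W v v' : ℝ} (hv : 0 < v) (hvv : v ≤ v') (hvW : v' ≤ W) :
    Gf W v' ≤ Gf W v := by
  have h := Gf_key hv hvv hvW
  have h2 : 0 ≤ (v' - v) / hf W v' :=
    div_nonneg (by linarith) (hf_pos (lt_of_lt_of_le hv hvv) hvW).le
  linarith

lemma Gf_nonneg {W v : ℝ} (hv : 0 < v) (hvW : v ≤ W) : 0 ≤ Gf W v := by
  exact Real.log_nonneg (log_ge_one hv hvW)


/-- Abstract per-piece region-growing bound. -/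
lemma piece_lemma {W β a cc t u : ℝ} (vol cvol : ℝ → ℝ)
    (hβ : 0 < β) (ha : 0 < a) (htu : t < u)
    (hvol_mono : ∀ ρ σ, t ≤ ρ → ρ ≤ σ → σ ≤ u → vol ρ ≤ vol σ)
    (hcvol_anti : ∀ ρ σ, t ≤ ρ → ρ ≤ σ → σ ≤ u → cvol σ ≤ cvol ρ)
    (hvol_lb : ∀ ρ σ, t ≤ ρ → ρ ≤ σ → σ < u → cc * (σ - ρ) ≤ vol σ - vol ρ)
    (hcvol_lb : ∀ ρ σ, t ≤ ρ → ρ ≤ σ → σ ≤ u → cc * (σ - ρ) ≤ cvol ρ - cvol σ)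
    (hvlo : ∀ ρ, t ≤ ρ → ρ ≤ u → β ≤ vol ρ) (hvhi : ∀ ρ, t ≤ ρ → ρ ≤ u → vol ρ ≤ W)
    (hwlo : ∀ ρ, t ≤ ρ → ρ ≤ u → β ≤ cvol ρ) (hwhi : ∀ ρ, t ≤ ρ → ρ ≤ u → cvol ρ ≤ W)
    (hcov : ∀ ρ, t ≤ ρ → ρ < u → a * hf W (vol ρ) < cc ∨ a * hf W (cvol ρ) < cc) :
    a * (u - t) < (Gf W (vol t) - Gf W (vol u)) + (Gf W (cvol u) - Gf W (cvol t)) := by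
  -- basic positivity
  have hvpos : ∀ ρ, t ≤ ρ → ρ ≤ u → 0 < vol ρ := fun ρ h1 h2 => lt_of_lt_of_le hβ (hvlo ρ h1 h2)
  have hwpos : ∀ ρ, t ≤ ρ → ρ ≤ u → 0 < cvol ρ := fun ρ h1 h2 => lt_of_lt_of_le hβ (hwlo ρ h1 h2)
  -- the vol-bad set
  set S1 : Set ℝ := {ρ | (t ≤ ρ ∧ ρ < u) ∧ a * hf W (vol ρ) < cc} with hS1
  have hbdd : BddAbove (insert t S1) := by
    refine ⟨u, ?_⟩
    rintro ρ (rfl | hρ)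
    · exact htu.le
    · exact hρ.1.2.le
  set s : ℝ := sSup (insert t S1) with hs
  have hts : t ≤ s := le_csSup hbdd (Set.mem_insert _ _)
  have hsu : s ≤ u := csSup_le (Set.insert_nonempty _ _) (by rintro ρ (rfl | hρ); exacts [htu.le, hρ.1.2.le])
  -- downward closure of S1
  have hdc : ∀ ρ ∈ S1, ∀ ρ', t ≤ ρ' → ρ' ≤ ρ → ρ' ∈ S1 := by
    intro ρ hρ ρ' h1 h2
    refine ⟨⟨h1, lt_of_le_of_lt h2 hρ.1.2⟩, lt_of_le_of_lt ?_ hρ.2⟩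
    have hv' : vol ρ' ≤ vol ρ := hvol_mono ρ' ρ h1 h2 hρ.1.2.le
    have := hf_le (hvpos ρ' h1 (le_trans h2 hρ.1.2.le)) hv' (hvhi ρ hρ.1.1 hρ.1.2.le)
    nlinarith
  -- pointwise bound (A), vol side
  have ptA : ∀ ρ ∈ S1, ∀ σ, t ≤ σ → σ ≤ ρ →
      a * (ρ - σ) ≤ Gf W (vol σ) - Gf W (vol ρ) ∧
      (σ < ρ → a * (ρ - σ) < Gf W (vol σ) - Gf W (vol ρ)) := by
    intro ρ hρ σ h1 h2
    have hρu : ρ < u := hρ.1.2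
    have hkey := Gf_key (hvpos σ h1 (le_trans h2 hρu.le)) (hvol_mono σ ρ h1 h2 hρu.le)
      (hvhi ρ hρ.1.1 hρu.le)
    have hlb := hvol_lb σ ρ h1 h2 hρu
    have hfp := hf_pos (hvpos ρ hρ.1.1 hρu.le) (hvhi ρ hρ.1.1 hρu.le)
    have hstep : cc * (ρ - σ) / hf W (vol ρ) ≤ Gf W (vol σ) - Gf W (vol ρ) := by
      refine le_trans ?_ hkey
      gcongr
    constructor
    · refine le_trans ?_ hstep
      rw [le_div_iff₀ hfp]
      nlinarith [mul_le_mul_of_nonneg_right hρ.2.le (sub_nonneg.2 h2)]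
    · intro hlt
      refine lt_of_lt_of_le ?_ hstep
      rw [lt_div_iff₀ hfp]
      nlinarith [mul_lt_mul_of_pos_right hρ.2 (sub_pos.2 hlt)]
  -- pointwise bound (B), cvol side
  have ptB : ∀ ρ, (t ≤ ρ ∧ ρ < u) → a * hf W (cvol ρ) < cc → ∀ σ, ρ ≤ σ → σ ≤ u →
      a * (σ - ρ) ≤ Gf W (cvol σ) - Gf W (cvol ρ) ∧
      (ρ < σ → a * (σ - ρ) < Gf W (cvol σ) - Gf W (cvol ρ)) := by
    intro ρ hρ hbad σ h1 h2
    have hkey := Gf_key (hwpos σ (le_trans hρ.1 h1) h2) (hcvol_anti ρ σ hρ.1 h1 h2)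
      (hwhi ρ hρ.1 hρ.2.le)
    have hlb := hcvol_lb ρ σ hρ.1 h1 h2
    have hfp := hf_pos (hwpos ρ hρ.1 hρ.2.le) (hwhi ρ hρ.1 hρ.2.le)
    have hstep : cc * (σ - ρ) / hf W (cvol ρ) ≤ Gf W (cvol σ) - Gf W (cvol ρ) := by
      refine le_trans ?_ hkey
      gcongr
    constructor
    · refine le_trans ?_ hstep
      rw [le_div_iff₀ hfp]
      nlinarith [mul_le_mul_of_nonneg_right hbad.le (sub_nonneg.2 h1)]
    · intro hlt
      refine lt_of_lt_of_le ?_ hstep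
      rw [lt_div_iff₀ hfp]
      nlinarith [mul_lt_mul_of_pos_right hbad (sub_pos.2 hlt)]
  -- claim A1
  have claimA1 : ∀ σ, t ≤ σ → σ ≤ s → a * (s - σ) ≤ Gf W (vol σ) - Gf W (vol u) := by
    intro σ h1 h2
    set X := Gf W (vol σ) - Gf W (vol u) with hX
    have hX0 : 0 ≤ X := by
      have := Gf_anti (hvpos σ h1 (le_trans h2 hsu)) (hvol_mono σ u h1 (le_trans h2 hsu) le_rfl)
        (hvhi u htu.le le_rfl)
      linarith
    have hsle : s ≤ σ + X / a := by
      apply csSup_le (Set.insert_nonempty _ _)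
      rintro ρ (rfl | hρ)
      · have : 0 ≤ X / a := div_nonneg hX0 ha.le
        linarith
      · rcases le_or_gt ρ σ with h | h
        · have : 0 ≤ X / a := div_nonneg hX0 ha.le
          linarith
        · have hA := (ptA ρ hρ σ h1 h.le).1
          have hGu : Gf W (vol u) ≤ Gf W (vol ρ) :=
            Gf_anti (hvpos ρ hρ.1.1 hρ.1.2.le) (hvol_mono ρ u hρ.1.1 hρ.1.2.le le_rfl)
              (hvhi u htu.le le_rfl)
          have hXa : ρ - σ ≤ X / a := (le_div_iff₀ ha).2 (by nlinarith)
          linarith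
    calc a * (s - σ) ≤ a * (X / a) := by nlinarith
      _ = X := by field_simp
  -- claim B1 : beyond s everything is cvol-bad
  have claimB1 : ∀ σ, s < σ → σ < u → a * hf W (cvol σ) < cc := by
    intro σ h1 h2
    rcases hcov σ (le_trans hts h1.le) h2 with h | h
    · exfalso
      have : σ ∈ S1 := ⟨⟨le_trans hts h1.le, h2⟩, h⟩
      have := le_csSup hbdd (Set.mem_insert_of_mem _ this)
      exact absurd h1 (not_lt.2 this)
    · exact h
  -- claim B2
  have claimB2 : a * (u - s) ≤ Gf W (cvol u) - Gf W (cvol s) := by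
    have hY0 : 0 ≤ Gf W (cvol u) - Gf W (cvol s) := by
      have := Gf_anti (hwpos u htu.le le_rfl) (hcvol_anti s u hts hsu le_rfl)
        (hwhi s hts hsu)
      linarith
    rcases eq_or_lt_of_le hsu with heq | hlt
    · rw [heq]; simp
    · apply le_of_forall_pos_le_add
      intro ε hε
      have hεa : 0 < ε / a := div_pos hε ha
      obtain ⟨σ, hσ⟩ : ∃ σ : ℝ, σ = s + min (ε / a) (u - s) / 2 := ⟨_, rfl⟩
      have hminpos : 0 < min (ε / a) (u - s) := lt_min hεa (by linarith)
      have hσ1 : s < σ := by rw [hσ]; linarith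
      have hσ2 : σ < u := by
        have h1 : min (ε / a) (u - s) ≤ u - s := min_le_right _ _
        rw [hσ]; linarith
      have hB := (ptB σ ⟨le_trans hts hσ1.le, hσ2⟩ (claimB1 σ hσ1 hσ2) u hσ2.le le_rfl).1
      have hGs : Gf W (cvol s) ≤ Gf W (cvol σ) :=
        Gf_anti (hwpos σ (le_trans hts hσ1.le) hσ2.le)
          (hcvol_anti s σ hts hσ1.le hσ2.le) (hwhi s hts hsu)
      have hgoal1 : a * (u - σ) ≤ Gf W (cvol u) - Gf W (cvol s) := by linarith
      have hext : a * (u - s) = a * (u - σ) + a * (min (ε / a) (u - s) / 2) := by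
        rw [hσ]; ring
      have hmin : min (ε / a) (u - s) ≤ ε / a := min_le_left _ _
      have haε : a * (min (ε / a) (u - s) / 2) ≤ ε := by
        have h1 : a * (ε / a) = ε := by field_simp
        nlinarith
      linarith
  -- final case split
  rcases eq_or_lt_of_le hts with hst | hst
  · -- s = t : everything in (t,u) is cvol-bad
    obtain ⟨σ, hσ⟩ : ∃ σ : ℝ, σ = (t + u) / 2 := ⟨_, rfl⟩
    have hσ1 : t < σ := by rw [hσ]; linarith
    have hσ2 : σ < u := by rw [hσ]; linarith
    have hstσ : s < σ := by rw [← hst]; exact hσ1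
    have hbadσ : a * hf W (cvol σ) < cc := claimB1 σ hstσ hσ2
    have hBstrict := (ptB σ ⟨hσ1.le, hσ2⟩ hbadσ u hσ2.le le_rfl).2 hσ2
    -- lower part: a * (σ - t) ≤ Gf(cvol σ) - Gf(cvol t)
    have hlow : a * (σ - t) ≤ Gf W (cvol σ) - Gf W (cvol t) := by
      apply le_of_forall_pos_le_add
      intro ε hε
      have hεa : 0 < ε / a := div_pos hε ha
      obtain ⟨ρ, hρd⟩ : ∃ ρ : ℝ, ρ = t + min (ε / a) (σ - t) / 2 := ⟨_, rfl⟩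
      have hminpos : 0 < min (ε / a) (σ - t) := lt_min hεa (by linarith)
      have hρ1 : t < ρ := by rw [hρd]; linarith
      have hρ2 : ρ < σ := by
        have h1 : min (ε / a) (σ - t) ≤ σ - t := min_le_right _ _
        rw [hρd]; linarith
      have hρu : ρ < u := lt_trans hρ2 hσ2
      have hstρ : s < ρ := by rw [← hst]; exact hρ1
      have hbadρ : a * hf W (cvol ρ) < cc := claimB1 ρ hstρ hρu
      have hB := (ptB ρ ⟨hρ1.le, hρu⟩ hbadρ σ hρ2.le hσ2.le).1
      have hGt : Gf W (cvol t) ≤ Gf W (cvol ρ) :=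
        Gf_anti (hwpos ρ hρ1.le hρu.le) (hcvol_anti t ρ le_rfl hρ1.le hρu.le)
          (hwhi t le_rfl htu.le)
      have hmin : min (ε / a) (σ - t) ≤ ε / a := min_le_left _ _
      have haε : a * (min (ε / a) (σ - t) / 2) ≤ ε := by
        have h1 : a * (ε / a) = ε := by field_simp
        nlinarith
      have hext : a * (σ - t) = a * (σ - ρ) + a * (min (ε / a) (σ - t) / 2) := by
        rw [hρd]; ring
      linarith
    have hvol0 : 0 ≤ Gf W (vol t) - Gf W (vol u) := by
      have := Gf_anti (hvpos t le_rfl htu.le) (hvol_mono t u le_rfl htu.le le_rfl)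
        (hvhi u htu.le le_rfl)
      linarith
    have : a * (u - t) = a * (u - σ) + a * (σ - t) := by ring
    linarith
  · -- t < s : midpoint of (t,s) is in S1
    obtain ⟨σ, hσ⟩ : ∃ σ : ℝ, σ = (t + s) / 2 := ⟨_, rfl⟩
    have hσ1 : t < σ := by rw [hσ]; linarith
    have hσ2 : σ < s := by rw [hσ]; linarith
    have hσS1 : σ ∈ S1 := by
      obtain ⟨ρ, hρ, hρσ⟩ := exists_lt_of_lt_csSup (Set.insert_nonempty _ _) hσ2
      rcases hρ with rfl | hρ
      · exact absurd hρσ (not_lt.2 hσ1.le)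
      · exact hdc ρ hρ σ hσ1.le hρσ.le
    have hAstrict := (ptA σ hσS1 t le_rfl hσ1.le).2 hσ1
    have hA1 := claimA1 σ hσ1.le hσ2.le
    have hGct : Gf W (cvol s) ≥ Gf W (cvol t) := by
      exact Gf_anti (hwpos s hts hsu) (hcvol_anti t s le_rfl hts hsu) (hwhi t le_rfl htu.le)
    have : a * (u - t) = a * (σ - t) + a * (s - σ) + a * (u - s) := by ring
    linarith


noncomputable def contribR (cv ev dn dx ρ : ℝ) : ℝ :=
  if dx ≤ ρ then cv * ev else if dn ≤ ρ then cv * (ρ - dn) else 0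

noncomputable def ccontribR (cv ev dn dx ρ : ℝ) : ℝ :=
  if dx ≤ ρ then 0 else if dn ≤ ρ then cv * (dx - ρ) else cv * ev

section ContribR

variable {cv ev dn dx xe ρ ρ' σ : ℝ}

lemma contribR_nonneg (hc : 0 ≤ cv) (hev : 0 ≤ ev) : 0 ≤ contribR cv ev dn dx ρ := by
  unfold contribR; split_ifs
  · exact mul_nonneg hc hev
  · exact mul_nonneg hc (by linarith)
  · exact le_rfl

lemma contribR_mono (hc : 0 ≤ cv) (hev : 0 ≤ ev) (hlip : dn ≤ 1 → dx ≤ dn + ev)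
    (h : ρ ≤ ρ') (h1 : ρ' ≤ 1) : contribR cv ev dn dx ρ ≤ contribR cv ev dn dx ρ' := by
  unfold contribR; split_ifs <;>
    first
      | exact le_rfl
      | (exfalso; linarith)
      | exact mul_nonneg hc hev
      | exact mul_nonneg hc (by linarith)
      | exact mul_le_mul_of_nonneg_left (by linarith) hc
      | exact mul_le_mul_of_nonneg_left (by linarith [hlip (by linarith)]) hc

lemma contribR_le (hc : 0 ≤ cv) (hlip : dn ≤ 1 → dx ≤ dn + ev) (hevx : ev ≤ xe)
    (hxe : 0 ≤ xe) (h1 : ρ ≤ 1) : contribR cv ev dn dx ρ ≤ cv * xe := by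
  unfold contribR; split_ifs <;>
    first
      | exact mul_nonneg hc hxe
      | exact mul_le_mul_of_nonneg_left (by linarith) hc
      | exact mul_le_mul_of_nonneg_left (by linarith [hlip (by linarith)]) hc

lemma contribR_lin (h1 : dn ≤ σ) (h2 : σ ≤ ρ) (h3 : ρ < dx) :
    contribR cv ev dn dx ρ - contribR cv ev dn dx σ = cv * (ρ - σ) := by
  unfold contribR; split_ifs <;>
    first
      | ring1
      | (exfalso; linarith)

lemma ccontribR_nonneg (hc : 0 ≤ cv) (hev : 0 ≤ ev) : 0 ≤ ccontribR cv ev dn dx ρ := by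
  unfold ccontribR; split_ifs
  · exact le_rfl
  · exact mul_nonneg hc (by linarith)
  · exact mul_nonneg hc hev

lemma ccontribR_anti (hc : 0 ≤ cv) (hev : 0 ≤ ev) (hlip : dn ≤ 1 → dx ≤ dn + ev)
    (h : ρ ≤ ρ') (h1 : ρ' ≤ 1) : ccontribR cv ev dn dx ρ' ≤ ccontribR cv ev dn dx ρ := by
  unfold ccontribR; split_ifs <;>
    first
      | exact le_rfl
      | (exfalso; linarith)
      | exact mul_nonneg hc hev
      | exact mul_nonneg hc (by linarith)
      | exact mul_le_mul_of_nonneg_left (by linarith) hc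
      | exact mul_le_mul_of_nonneg_left (by linarith [hlip (by linarith)]) hc

lemma ccontribR_le (hc : 0 ≤ cv) (hlip : dn ≤ 1 → dx ≤ dn + ev) (hevx : ev ≤ xe)
    (hxe : 0 ≤ xe) (h1 : ρ ≤ 1) : ccontribR cv ev dn dx ρ ≤ cv * xe := by
  unfold ccontribR; split_ifs <;>
    first
      | exact mul_nonneg hc hxe
      | exact mul_le_mul_of_nonneg_left (by linarith) hc
      | exact mul_le_mul_of_nonneg_left (by linarith [hlip (by linarith)]) hc
      | exact mul_le_mul_of_nonneg_left hevx hc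

lemma ccontribR_lin (h1 : dn ≤ σ) (h2 : σ ≤ ρ) (h3 : ρ ≤ dx) (h4 : σ < dx) :
    ccontribR cv ev dn dx σ - ccontribR cv ev dn dx ρ = cv * (ρ - σ) := by
  unfold ccontribR; split_ifs <;>
    first
      | ring1
      | (exfalso; linarith)
      | (have hdxρ : dx = ρ := by linarith
         rw [hdxρ]; ring1)

end ContribR

section Metric

variable {G : SimpleGraph V} {x y : Sym2 V → ℝ} {ℓ : V → V → ℝ}

lemma walk_sum_nonneg (hx : ∀ e, 0 ≤ x e) (hy : ∀ e, 0 ≤ y e) {u v : V} (p : G.Walk u v) :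
    0 ≤ (p.edges.map fun e => x e + y e).sum := by
  apply List.sum_nonneg
  intro a ha
  obtain ⟨e, -, rfl⟩ := List.mem_map.1 ha
  exact add_nonneg (hx e) (hy e)

lemma ell_nonneg (hx : ∀ e, 0 ≤ x e) (hy : ∀ e, 0 ≤ y e)
    (hattain : ∀ u v, G.Reachable u v →
      ∃ p : G.Walk u v, ℓ u v = (p.edges.map fun e => x e + y e).sum)
    (hfar : ∀ u v, ¬ G.Reachable u v → 1 < ℓ u v) (u v : V) : 0 ≤ ℓ u v := by
  by_cases h : G.Reachable u v
  · obtain ⟨p, hp⟩ := hattain u v h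
    rw [hp]; exact walk_sum_nonneg hx hy p
  · linarith [hfar u v h]

lemma ell_symm (hle : ∀ u v, ∀ p : G.Walk u v, ℓ u v ≤ (p.edges.map fun e => x e + y e).sum)
    (hattain : ∀ u v, G.Reachable u v →
      ∃ p : G.Walk u v, ℓ u v = (p.edges.map fun e => x e + y e).sum)
    {u v : V} (h : G.Reachable u v) : ℓ u v = ℓ v u := by
  have key : ∀ a b : V, G.Reachable a b → ℓ a b ≤ ℓ b a := by
    intro a b hab
    obtain ⟨p, hp⟩ := hattain b a hab.symm
    have h2 := hle a b p.reverse
    rwa [SimpleGraph.Walk.edges_reverse, List.map_reverse, List.sum_reverse, ← hp] at h2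
  exact le_antisymm (key u v h) (key v u h.symm)

lemma ell_tri (hle : ∀ u v, ∀ p : G.Walk u v, ℓ u v ≤ (p.edges.map fun e => x e + y e).sum)
    (hattain : ∀ u v, G.Reachable u v →
      ∃ p : G.Walk u v, ℓ u v = (p.edges.map fun e => x e + y e).sum)
    {z u v : V} (hzu : G.Reachable z u) (huv : G.Adj u v) : ℓ z v ≤ ℓ z u + ℓ u v := by
  obtain ⟨p, hp⟩ := hattain z u hzu
  obtain ⟨q, hq⟩ := hattain u v huv.reachable
  have h2 := hle z v (p.append q)
  rwa [SimpleGraph.Walk.edges_append, List.map_append, List.sum_append, ← hp, ← hq] at h2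

lemma ell_adj_le (hle : ∀ u v, ∀ p : G.Walk u v, ℓ u v ≤ (p.edges.map fun e => x e + y e).sum)
    {u v : V} (h : G.Adj u v) : ℓ u v ≤ x s(u, v) + y s(u, v) := by
  have h2 := hle u v ((SimpleGraph.Walk.nil' v).cons h)
  simpa using h2

lemma elen_adj (hle : ∀ u v, ∀ p : G.Walk u v, ℓ u v ≤ (p.edges.map fun e => x e + y e).sum)
    (hattain : ∀ u v, G.Reachable u v →
      ∃ p : G.Walk u v, ℓ u v = (p.edges.map fun e => x e + y e).sum)
    {u v : V} (h : G.Adj u v) : elen ℓ s(u, v) = ℓ u v := by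
  have h2 := ell_symm hle hattain h.reachable
  simp only [elen, Sym2.lift_mk]
  linarith

lemma elen_nonneg (hx : ∀ e, 0 ≤ x e) (hy : ∀ e, 0 ≤ y e)
    (hattain : ∀ u v, G.Reachable u v →
      ∃ p : G.Walk u v, ℓ u v = (p.edges.map fun e => x e + y e).sum)
    (hfar : ∀ u v, ¬ G.Reachable u v → 1 < ℓ u v) (e : Sym2 V) : 0 ≤ elen ℓ e := by
  induction e using Sym2.ind with
  | _ u v =>
    simp only [elen, Sym2.lift_mk]
    have h1 := ell_nonneg hx hy hattain hfar u v
    have h2 := ell_nonneg hx hy hattain hfar v u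
    linarith

lemma dmin_nonneg (hx : ∀ e, 0 ≤ x e) (hy : ∀ e, 0 ≤ y e)
    (hattain : ∀ u v, G.Reachable u v →
      ∃ p : G.Walk u v, ℓ u v = (p.edges.map fun e => x e + y e).sum)
    (hfar : ∀ u v, ¬ G.Reachable u v → 1 < ℓ u v) (z : V) (e : Sym2 V) :
    0 ≤ dmin (ℓ z) e := by
  induction e using Sym2.ind with
  | _ u v =>
    simp only [dmin, Sym2.lift_mk, le_min_iff]
    exact ⟨ell_nonneg hx hy hattain hfar z u, ell_nonneg hx hy hattain hfar z v⟩

lemma dmin_le_dmax {g : V → ℝ} (e : Sym2 V) : dmin g e ≤ dmax g e := by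
  induction e using Sym2.ind with
  | _ u v =>
    simp only [dmin, dmax, Sym2.lift_mk]
    exact min_le_max

lemma dmax_nonneg (hx : ∀ e, 0 ≤ x e) (hy : ∀ e, 0 ≤ y e)
    (hattain : ∀ u v, G.Reachable u v →
      ∃ p : G.Walk u v, ℓ u v = (p.edges.map fun e => x e + y e).sum)
    (hfar : ∀ u v, ¬ G.Reachable u v → 1 < ℓ u v) (z : V) (e : Sym2 V) :
    0 ≤ dmax (ℓ z) e :=
  le_trans (dmin_nonneg hx hy hattain hfar z e) (dmin_le_dmax e)

/-- Lipschitz property of the distance along an edge. -/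
lemma dmax_le_dmin_add_elen
    (hle : ∀ u v, ∀ p : G.Walk u v, ℓ u v ≤ (p.edges.map fun e => x e + y e).sum)
    (hattain : ∀ u v, G.Reachable u v →
      ∃ p : G.Walk u v, ℓ u v = (p.edges.map fun e => x e + y e).sum)
    (hfar : ∀ u v, ¬ G.Reachable u v → 1 < ℓ u v) (z : V) {e : Sym2 V}
    (he : e ∈ G.edgeSet) (hd : dmin (ℓ z) e ≤ 1) :
    dmax (ℓ z) e ≤ dmin (ℓ z) e + elen ℓ e := by
  induction e using Sym2.ind with
  | _ u v =>
    rw [SimpleGraph.mem_edgeSet] at he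
    have hel : elen ℓ s(u, v) = ℓ u v := elen_adj hle hattain he
    simp only [dmin, dmax, Sym2.lift_mk] at hd ⊢
    rw [hel]
    rcases le_total (ℓ z u) (ℓ z v) with h | h
    · rw [min_eq_left h] at hd ⊢
      rw [max_eq_right h]
      have hreach : G.Reachable z u := by
        by_contra hr
        linarith [hfar z u hr]
      exact ell_tri hle hattain hreach he
    · rw [min_eq_right h] at hd ⊢
      rw [max_eq_left h]
      have hreach : G.Reachable z v := by
        by_contra hr
        linarith [hfar z v hr]
      have h3 := ell_tri hle hattain hreach he.symm
      have h4 := ell_symm hle hattain he.reachable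
      linarith

lemma elen_le_xy (hle : ∀ u v, ∀ p : G.Walk u v, ℓ u v ≤ (p.edges.map fun e => x e + y e).sum)
    (hattain : ∀ u v, G.Reachable u v →
      ∃ p : G.Walk u v, ℓ u v = (p.edges.map fun e => x e + y e).sum)
    {e : Sym2 V} (he : e ∈ G.edgeSet) : elen ℓ e ≤ x e + y e := by
  induction e using Sym2.ind with
  | _ u v =>
    rw [SimpleGraph.mem_edgeSet] at he
    rw [elen_adj hle hattain he]
    exact ell_adj_le hle he

end Metric

section VolEq

variable [Fintype V] [DecidableEq V] (G : SimpleGraph V) [DecidableRel G.Adj]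
  (c : Sym2 V → ℝ) (ℓ : V → V → ℝ) (F : Finset (Sym2 V)) (S : Finset V) (z : V) (β : ℝ)

lemma vol_eq (hFE : F ⊆ G.edgeFinset) (ρ : ℝ) :
    vol G c ℓ F S z β ρ = β + ∑ e ∈ F.filter (fun e => ∀ w ∈ e, w ∈ S),
      contribR (c e) (elen ℓ e) (dmin (ℓ z) e) (dmax (ℓ z) e) ρ := by
  classical
  set g := ℓ z
  set FS := F.filter (fun e => ∀ w ∈ e, w ∈ S) with hFS
  have h1 : F.filter (fun e => ∀ w ∈ e, w ∈ ball g S ρ)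
      = FS.filter (fun e => dmax g e ≤ ρ) := by
    rw [hFS, Finset.filter_filter]
    apply Finset.filter_congr
    intro e he
    induction e using Sym2.ind with
    | _ u v =>
      simp only [ball, Sym2.mem_iff, Finset.mem_filter]
      constructor
      · intro h
        have hu := h u (Or.inl rfl)
        have hv := h v (Or.inr rfl)
        refine ⟨fun w hw => ?_, ?_⟩
        · rcases hw with rfl | rfl
          exacts [hu.1, hv.1]
        · simp only [dmax, Sym2.lift_mk, max_le_iff]
          exact ⟨hu.2, hv.2⟩
      · rintro ⟨hS, hm⟩ w hw
        simp only [dmax, Sym2.lift_mk, max_le_iff] at hm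
        rcases hw with rfl | rfl
        exacts [⟨hS w (Or.inl rfl), hm.1⟩, ⟨hS w (Or.inr rfl), hm.2⟩]
  have h2 : bdry G g S ρ ∩ F = FS.filter (fun e => ¬ dmax g e ≤ ρ ∧ dmin g e ≤ ρ) := by
    ext e
    simp only [bdry, Finset.mem_inter, Finset.mem_filter, hFS]
    constructor
    · rintro ⟨⟨he, hS, h3, h4⟩, hF⟩
      exact ⟨⟨hF, hS⟩, not_le.2 h4, h3⟩
    · rintro ⟨⟨hF, hS⟩, h4, h3⟩
      exact ⟨⟨hFE hF, hS, h3, not_le.1 h4⟩, hF⟩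
  rw [vol, h1, h2]
  have hsplit := Finset.sum_filter_add_sum_filter_not FS (fun e => dmax g e ≤ ρ)
    (fun e => contribR (c e) (elen ℓ e) (dmin g e) (dmax g e) ρ)
  have hsplit2 := Finset.sum_filter_add_sum_filter_not (FS.filter (fun e => ¬ dmax g e ≤ ρ))
    (fun e => dmin g e ≤ ρ)
    (fun e => contribR (c e) (elen ℓ e) (dmin g e) (dmax g e) ρ)
  have e1 : ∑ e ∈ FS.filter (fun e => dmax g e ≤ ρ),
      contribR (c e) (elen ℓ e) (dmin g e) (dmax g e) ρ
      = ∑ e ∈ FS.filter (fun e => dmax g e ≤ ρ), c e * elen ℓ e := by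
    apply Finset.sum_congr rfl
    intro e he
    rw [Finset.mem_filter] at he
    rw [contribR, if_pos he.2]
  have e2 : ∑ e ∈ (FS.filter (fun e => ¬ dmax g e ≤ ρ)).filter (fun e => dmin g e ≤ ρ),
      contribR (c e) (elen ℓ e) (dmin g e) (dmax g e) ρ
      = ∑ e ∈ FS.filter (fun e => ¬ dmax g e ≤ ρ ∧ dmin g e ≤ ρ), c e * (ρ - dmin g e) := by
    rw [Finset.filter_filter]
    apply Finset.sum_congr rfl
    intro e he
    rw [Finset.mem_filter] at he
    rw [contribR, if_neg he.2.1, if_pos he.2.2]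
  have e3 : ∑ e ∈ (FS.filter (fun e => ¬ dmax g e ≤ ρ)).filter (fun e => ¬ dmin g e ≤ ρ),
      contribR (c e) (elen ℓ e) (dmin g e) (dmax g e) ρ = 0 := by
    apply Finset.sum_eq_zero
    intro e he
    simp only [Finset.filter_filter, Finset.mem_filter] at he
    rw [contribR, if_neg he.2.1, if_neg he.2.2]
  linarith

lemma cvol_eq (hFE : F ⊆ G.edgeFinset) (ρ : ℝ) :
    cvol G c ℓ F S z β ρ = β + ∑ e ∈ F.filter (fun e => ∀ w ∈ e, w ∈ S),
      ccontribR (c e) (elen ℓ e) (dmin (ℓ z) e) (dmax (ℓ z) e) ρ := by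
  classical
  set g := ℓ z
  set FS := F.filter (fun e => ∀ w ∈ e, w ∈ S) with hFS
  have h1 : F.filter (fun e => ∀ w ∈ e, w ∈ S ∧ w ∉ ball g S ρ)
      = FS.filter (fun e => ¬ dmin g e ≤ ρ) := by
    rw [hFS, Finset.filter_filter]
    apply Finset.filter_congr
    intro e he
    induction e using Sym2.ind with
    | _ u v =>
      simp only [ball, Sym2.mem_iff, Finset.mem_filter]
      constructor
      · intro h
        have hu := h u (Or.inl rfl)
        have hv := h v (Or.inr rfl)
        refine ⟨fun w hw => ?_, ?_⟩
        · rcases hw with rfl | rfl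
          exacts [hu.1, hv.1]
        · simp only [dmin, Sym2.lift_mk, not_le, lt_min_iff]
          constructor
          · rcases lt_or_ge ρ (g u) with h' | h'
            · exact h'
            · exact absurd ⟨hu.1, h'⟩ hu.2
          · rcases lt_or_ge ρ (g v) with h' | h'
            · exact h'
            · exact absurd ⟨hv.1, h'⟩ hv.2
      · rintro ⟨hS, hm⟩ w hw
        simp only [dmin, Sym2.lift_mk, not_le, lt_min_iff] at hm
        rcases hw with rfl | rfl
        · exact ⟨hS w (Or.inl rfl), fun hmem => absurd hmem.2 (not_le.2 hm.1)⟩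
        · exact ⟨hS w (Or.inr rfl), fun hmem => absurd hmem.2 (not_le.2 hm.2)⟩
  have h2 : bdry G g S ρ ∩ F = FS.filter (fun e => dmin g e ≤ ρ ∧ ¬ dmax g e ≤ ρ) := by
    ext e
    simp only [bdry, Finset.mem_inter, Finset.mem_filter, hFS]
    constructor
    · rintro ⟨⟨he, hS, h3, h4⟩, hF⟩
      exact ⟨⟨hF, hS⟩, h3, not_le.2 h4⟩
    · rintro ⟨⟨hF, hS⟩, h3, h4⟩
      exact ⟨⟨hFE hF, hS, h3, not_le.1 h4⟩, hF⟩
  rw [cvol, h1, h2]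
  have hsplit := Finset.sum_filter_add_sum_filter_not FS (fun e => dmin g e ≤ ρ)
    (fun e => ccontribR (c e) (elen ℓ e) (dmin g e) (dmax g e) ρ)
  have hsplit2 := Finset.sum_filter_add_sum_filter_not (FS.filter (fun e => dmin g e ≤ ρ))
    (fun e => dmax g e ≤ ρ)
    (fun e => ccontribR (c e) (elen ℓ e) (dmin g e) (dmax g e) ρ)
  have e1 : ∑ e ∈ FS.filter (fun e => ¬ dmin g e ≤ ρ),
      ccontribR (c e) (elen ℓ e) (dmin g e) (dmax g e) ρ
      = ∑ e ∈ FS.filter (fun e => ¬ dmin g e ≤ ρ), c e * elen ℓ e := by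
    apply Finset.sum_congr rfl
    intro e he
    rw [Finset.mem_filter] at he
    have hd : ¬ dmax g e ≤ ρ := fun h => he.2 (le_trans (dmin_le_dmax e) h)
    rw [ccontribR, if_neg hd, if_neg he.2]
  have e2 : ∑ e ∈ (FS.filter (fun e => dmin g e ≤ ρ)).filter (fun e => ¬ dmax g e ≤ ρ),
      ccontribR (c e) (elen ℓ e) (dmin g e) (dmax g e) ρ
      = ∑ e ∈ FS.filter (fun e => dmin g e ≤ ρ ∧ ¬ dmax g e ≤ ρ), c e * (dmax g e - ρ) := by
    rw [Finset.filter_filter]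
    apply Finset.sum_congr rfl
    intro e he
    rw [Finset.mem_filter] at he
    rw [ccontribR, if_neg he.2.2, if_pos he.2.1]
  have e3 : ∑ e ∈ (FS.filter (fun e => dmin g e ≤ ρ)).filter (fun e => dmax g e ≤ ρ),
      ccontribR (c e) (elen ℓ e) (dmin g e) (dmax g e) ρ = 0 := by
    apply Finset.sum_eq_zero
    intro e he
    simp only [Finset.filter_filter, Finset.mem_filter] at he
    rw [ccontribR, if_pos he.2.2]
  linarith

end VolEq

section SumLevel

variable [Fintype V] [DecidableEq V] {G : SimpleGraph V} [DecidableRel G.Adj]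
  {c x : Sym2 V → ℝ} {ℓ : V → V → ℝ} {F : Finset (Sym2 V)} {S : Finset V} {z : V} {β : ℝ}

lemma mem_FS_edge (hFE : F ⊆ G.edgeFinset) {e : Sym2 V}
    (he : e ∈ F.filter (fun e => ∀ w ∈ e, w ∈ S)) : e ∈ G.edgeFinset :=
  hFE (Finset.mem_filter.1 he).1

lemma vol_mono (hFE : F ⊆ G.edgeFinset) (hc : ∀ e, 0 ≤ c e) (hev : ∀ e, 0 ≤ elen ℓ e)
    (hlip : ∀ e ∈ G.edgeFinset, dmin (ℓ z) e ≤ 1 → dmax (ℓ z) e ≤ dmin (ℓ z) e + elen ℓ e)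
    {ρ ρ' : ℝ} (h : ρ ≤ ρ') (h1 : ρ' ≤ 1) :
    vol G c ℓ F S z β ρ ≤ vol G c ℓ F S z β ρ' := by
  rw [vol_eq G c ℓ F S z β hFE, vol_eq G c ℓ F S z β hFE]
  have := Finset.sum_le_sum (s := F.filter (fun e => ∀ w ∈ e, w ∈ S))
    (f := fun e => contribR (c e) (elen ℓ e) (dmin (ℓ z) e) (dmax (ℓ z) e) ρ)
    (g := fun e => contribR (c e) (elen ℓ e) (dmin (ℓ z) e) (dmax (ℓ z) e) ρ')
    (fun e he => contribR_mono (hc e) (hev e) (hlip e (mem_FS_edge hFE he)) h h1)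
  linarith

lemma cvol_anti (hFE : F ⊆ G.edgeFinset) (hc : ∀ e, 0 ≤ c e) (hev : ∀ e, 0 ≤ elen ℓ e)
    (hlip : ∀ e ∈ G.edgeFinset, dmin (ℓ z) e ≤ 1 → dmax (ℓ z) e ≤ dmin (ℓ z) e + elen ℓ e)
    {ρ ρ' : ℝ} (h : ρ ≤ ρ') (h1 : ρ' ≤ 1) :
    cvol G c ℓ F S z β ρ' ≤ cvol G c ℓ F S z β ρ := by
  rw [cvol_eq G c ℓ F S z β hFE, cvol_eq G c ℓ F S z β hFE]
  have := Finset.sum_le_sum (s := F.filter (fun e => ∀ w ∈ e, w ∈ S))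
    (f := fun e => ccontribR (c e) (elen ℓ e) (dmin (ℓ z) e) (dmax (ℓ z) e) ρ')
    (g := fun e => ccontribR (c e) (elen ℓ e) (dmin (ℓ z) e) (dmax (ℓ z) e) ρ)
    (fun e he => ccontribR_anti (hc e) (hev e) (hlip e (mem_FS_edge hFE he)) h h1)
  linarith

lemma beta_le_vol (hFE : F ⊆ G.edgeFinset) (hc : ∀ e, 0 ≤ c e) (hev : ∀ e, 0 ≤ elen ℓ e)
    (ρ : ℝ) : β ≤ vol G c ℓ F S z β ρ := by
  rw [vol_eq G c ℓ F S z β hFE]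
  have : (0:ℝ) ≤ ∑ e ∈ F.filter (fun e => ∀ w ∈ e, w ∈ S),
      contribR (c e) (elen ℓ e) (dmin (ℓ z) e) (dmax (ℓ z) e) ρ :=
    Finset.sum_nonneg (fun e _ => contribR_nonneg (hc e) (hev e))
  linarith

lemma beta_le_cvol (hFE : F ⊆ G.edgeFinset) (hc : ∀ e, 0 ≤ c e) (hev : ∀ e, 0 ≤ elen ℓ e)
    (ρ : ℝ) : β ≤ cvol G c ℓ F S z β ρ := by
  rw [cvol_eq G c ℓ F S z β hFE]
  have : (0:ℝ) ≤ ∑ e ∈ F.filter (fun e => ∀ w ∈ e, w ∈ S),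
      ccontribR (c e) (elen ℓ e) (dmin (ℓ z) e) (dmax (ℓ z) e) ρ :=
    Finset.sum_nonneg (fun e _ => ccontribR_nonneg (hc e) (hev e))
  linarith

lemma sum_cx_le (hc : ∀ e, 0 ≤ c e) (hx : ∀ e, 0 ≤ x e) (hFE : F ⊆ G.edgeFinset) :
    ∑ e ∈ F.filter (fun e => ∀ w ∈ e, w ∈ S), c e * x e
      ≤ ∑ e ∈ G.edgeFinset.filter (fun e => ∀ w ∈ e, w ∈ S), c e * x e :=
  Finset.sum_le_sum_of_subset_of_nonneg
    (Finset.filter_subset_filter _ hFE)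
    (fun e _ _ => mul_nonneg (hc e) (hx e))

lemma vol_le_Vx (hFE : F ⊆ G.edgeFinset) (hc : ∀ e, 0 ≤ c e) (hx : ∀ e, 0 ≤ x e)
    (hlip : ∀ e ∈ G.edgeFinset, dmin (ℓ z) e ≤ 1 → dmax (ℓ z) e ≤ dmin (ℓ z) e + elen ℓ e)
    (hevx : ∀ e ∈ F, elen ℓ e ≤ x e) {ρ : ℝ} (h1 : ρ ≤ 1) :
    vol G c ℓ F S z β ρ ≤ Vx G c x S β := by
  rw [vol_eq G c ℓ F S z β hFE, Vx]
  have h2 : ∑ e ∈ F.filter (fun e => ∀ w ∈ e, w ∈ S),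
      contribR (c e) (elen ℓ e) (dmin (ℓ z) e) (dmax (ℓ z) e) ρ
      ≤ ∑ e ∈ F.filter (fun e => ∀ w ∈ e, w ∈ S), c e * x e :=
    Finset.sum_le_sum (fun e he => contribR_le (hc e) (hlip e (mem_FS_edge hFE he))
      (hevx e (Finset.mem_filter.1 he).1) (hx e) h1)
  have h3 := sum_cx_le (S := S) hc hx hFE
  linarith

lemma cvol_le_Vx (hFE : F ⊆ G.edgeFinset) (hc : ∀ e, 0 ≤ c e) (hx : ∀ e, 0 ≤ x e)
    (hlip : ∀ e ∈ G.edgeFinset, dmin (ℓ z) e ≤ 1 → dmax (ℓ z) e ≤ dmin (ℓ z) e + elen ℓ e)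
    (hevx : ∀ e ∈ F, elen ℓ e ≤ x e) {ρ : ℝ} (h1 : ρ ≤ 1) :
    cvol G c ℓ F S z β ρ ≤ Vx G c x S β := by
  rw [cvol_eq G c ℓ F S z β hFE, Vx]
  have h2 : ∑ e ∈ F.filter (fun e => ∀ w ∈ e, w ∈ S),
      ccontribR (c e) (elen ℓ e) (dmin (ℓ z) e) (dmax (ℓ z) e) ρ
      ≤ ∑ e ∈ F.filter (fun e => ∀ w ∈ e, w ∈ S), c e * x e :=
    Finset.sum_le_sum (fun e he => ccontribR_le (hc e) (hlip e (mem_FS_edge hFE he))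
      (hevx e (Finset.mem_filter.1 he).1) (hx e) h1)
  have h3 := sum_cx_le (S := S) hc hx hFE
  linarith

lemma vol_lb (hFE : F ⊆ G.edgeFinset) (hc : ∀ e, 0 ≤ c e) (hev : ∀ e, 0 ≤ elen ℓ e)
    (hlip : ∀ e ∈ G.edgeFinset, dmin (ℓ z) e ≤ 1 → dmax (ℓ z) e ≤ dmin (ℓ z) e + elen ℓ e)
    {A : Finset (Sym2 V)} (hA : A ⊆ F.filter (fun e => ∀ w ∈ e, w ∈ S))
    {ρ ρ' : ℝ} (h : ρ ≤ ρ') (h1 : ρ' ≤ 1)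
    (hcross : ∀ e ∈ A, dmin (ℓ z) e ≤ ρ ∧ ρ' < dmax (ℓ z) e) :
    (∑ e ∈ A, c e) * (ρ' - ρ) ≤ vol G c ℓ F S z β ρ' - vol G c ℓ F S z β ρ := by
  rw [vol_eq G c ℓ F S z β hFE, vol_eq G c ℓ F S z β hFE]
  set f := fun e => contribR (c e) (elen ℓ e) (dmin (ℓ z) e) (dmax (ℓ z) e) ρ' -
    contribR (c e) (elen ℓ e) (dmin (ℓ z) e) (dmax (ℓ z) e) ρ with hf
  have hsplit : ∑ e ∈ (F.filter (fun e => ∀ w ∈ e, w ∈ S)) \ A, f e + ∑ e ∈ A, f e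
      = ∑ e ∈ F.filter (fun e => ∀ w ∈ e, w ∈ S), f e := Finset.sum_sdiff hA
  have hApart : ∑ e ∈ A, f e = (∑ e ∈ A, c e) * (ρ' - ρ) := by
    rw [Finset.sum_mul]
    apply Finset.sum_congr rfl
    intro e he
    exact contribR_lin (hcross e he).1 h (hcross e he).2
  have hrest : 0 ≤ ∑ e ∈ (F.filter (fun e => ∀ w ∈ e, w ∈ S)) \ A, f e :=
    Finset.sum_nonneg (fun e he => by
      have he' := Finset.mem_sdiff.1 he
      have := contribR_mono (hc e) (hev e) (hlip e (mem_FS_edge hFE he'.1)) h h1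
      simp only [hf]; linarith)
  have hdist : ∑ e ∈ F.filter (fun e => ∀ w ∈ e, w ∈ S), f e
      = ∑ e ∈ F.filter (fun e => ∀ w ∈ e, w ∈ S),
          contribR (c e) (elen ℓ e) (dmin (ℓ z) e) (dmax (ℓ z) e) ρ' -
        ∑ e ∈ F.filter (fun e => ∀ w ∈ e, w ∈ S),
          contribR (c e) (elen ℓ e) (dmin (ℓ z) e) (dmax (ℓ z) e) ρ := by
    rw [hf, Finset.sum_sub_distrib]
  linarith

lemma cvol_lb (hFE : F ⊆ G.edgeFinset) (hc : ∀ e, 0 ≤ c e) (hev : ∀ e, 0 ≤ elen ℓ e)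
    (hlip : ∀ e ∈ G.edgeFinset, dmin (ℓ z) e ≤ 1 → dmax (ℓ z) e ≤ dmin (ℓ z) e + elen ℓ e)
    {A : Finset (Sym2 V)} (hA : A ⊆ F.filter (fun e => ∀ w ∈ e, w ∈ S))
    {ρ ρ' : ℝ} (h : ρ ≤ ρ') (h1 : ρ' ≤ 1)
    (hcross : ∀ e ∈ A, dmin (ℓ z) e ≤ ρ ∧ ρ' ≤ dmax (ℓ z) e ∧ ρ < dmax (ℓ z) e) :
    (∑ e ∈ A, c e) * (ρ' - ρ) ≤ cvol G c ℓ F S z β ρ - cvol G c ℓ F S z β ρ' := by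
  rw [cvol_eq G c ℓ F S z β hFE, cvol_eq G c ℓ F S z β hFE]
  set f := fun e => ccontribR (c e) (elen ℓ e) (dmin (ℓ z) e) (dmax (ℓ z) e) ρ -
    ccontribR (c e) (elen ℓ e) (dmin (ℓ z) e) (dmax (ℓ z) e) ρ' with hf
  have hsplit : ∑ e ∈ (F.filter (fun e => ∀ w ∈ e, w ∈ S)) \ A, f e + ∑ e ∈ A, f e
      = ∑ e ∈ F.filter (fun e => ∀ w ∈ e, w ∈ S), f e := Finset.sum_sdiff hA
  have hApart : ∑ e ∈ A, f e = (∑ e ∈ A, c e) * (ρ' - ρ) := by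
    rw [Finset.sum_mul]
    apply Finset.sum_congr rfl
    intro e he
    exact ccontribR_lin (hcross e he).1 h (hcross e he).2.1 (hcross e he).2.2
  have hrest : 0 ≤ ∑ e ∈ (F.filter (fun e => ∀ w ∈ e, w ∈ S)) \ A, f e :=
    Finset.sum_nonneg (fun e he => by
      have he' := Finset.mem_sdiff.1 he
      have := ccontribR_anti (hc e) (hev e) (hlip e (mem_FS_edge hFE he'.1)) h h1
      simp only [hf]; linarith)
  have hdist : ∑ e ∈ F.filter (fun e => ∀ w ∈ e, w ∈ S), f e
      = ∑ e ∈ F.filter (fun e => ∀ w ∈ e, w ∈ S),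
          ccontribR (c e) (elen ℓ e) (dmin (ℓ z) e) (dmax (ℓ z) e) ρ -
        ∑ e ∈ F.filter (fun e => ∀ w ∈ e, w ∈ S),
          ccontribR (c e) (elen ℓ e) (dmin (ℓ z) e) (dmax (ℓ z) e) ρ' := by
    rw [hf, Finset.sum_sub_distrib]
  linarith

end SumLevel

/-- If at most `q-1` boundary edges are in `H` and all others are in `Fp`, then `c^q` of the
boundary is at most the cost of the `Fp`-part. -/
lemma cq_le_sum [DecidableEq V] {c : Sym2 V → ℝ} (hc : ∀ (e : Sym2 V), 0 ≤ c e) {q : ℕ} {A Fp H : Finset (Sym2 V)}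
    (hsub : ∀ e ∈ A, e ∈ Fp ∨ e ∈ H) (hH : (A ∩ H).card + 1 ≤ q) :
    cq c q A ≤ ∑ e ∈ A ∩ Fp, c e := by
  unfold cq
  split_ifs with h
  · exact Finset.sum_nonneg (fun e _ => hc e)
  · push_neg at h
    have hcover : A ⊆ (A ∩ Fp) ∪ (A ∩ H) := by
      intro e he
      rcases hsub e he with h' | h'
      · exact Finset.mem_union_left _ (Finset.mem_inter.2 ⟨he, h'⟩)
      · exact Finset.mem_union_right _ (Finset.mem_inter.2 ⟨he, h'⟩)
    have hcard : A.card - (q - 1) ≤ (A ∩ Fp).card := by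
      have h1 := (Finset.card_le_card hcover).trans (Finset.card_union_le _ _)
      omega
    obtain ⟨B, hBsub, hBcard⟩ := Finset.exists_subset_card_eq hcard
    have hmem : (∑ e ∈ B, c e) ∈ ((fun B : Finset (Sym2 V) => ∑ e ∈ B, c e) ''
        {B : Finset (Sym2 V) | B ⊆ A ∧ B.card + (q - 1) = A.card}) := by
      refine ⟨B, ⟨hBsub.trans Finset.inter_subset_left, ?_⟩, rfl⟩
      omega
    have hbdd : BddBelow ((fun B : Finset (Sym2 V) => ∑ e ∈ B, c e) ''
        {B : Finset (Sym2 V) | B ⊆ A ∧ B.card + (q - 1) = A.card}) := by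
      apply Set.Finite.bddBelow
      apply Set.Finite.image
      have : {B : Finset (Sym2 V) | B ⊆ A ∧ B.card + (q - 1) = A.card}
          ⊆ ↑A.powerset := by
        intro B hB
        simpa [Finset.mem_powerset] using hB.1
      exact (A.powerset.finite_toSet).subset this
    refine le_trans (csInf_le hbdd hmem) ?_
    exact Finset.sum_le_sum_of_subset_of_nonneg hBsub (fun e _ _ => hc e)

/-- Telescoping sum over `Icc`. -/
lemma sum_Icc_telescope (T : ℕ → ℝ) {a b : ℕ} (hab : a ≤ b) :
    ∑ j ∈ Finset.Icc a b, (T (j + 1) - T j) = T (b + 1) - T a := by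
  induction b, hab using Nat.le_induction with
  | base => simp
  | succ n hn ih =>
    rw [Finset.sum_Icc_succ_top (by omega)]
    rw [ih]
    ring



set_option maxHeartbeats 2000000 in
/-- Region growing for the multicut LP metrics: in the subdivided LP
setup (with `ℓ` the shortest-path pseudometric of the edge lengths `x + y`, encoded by
`hle`/`hattain`, and `ℓ u v > 1` for unreachable pairs), for every `S ⊆ V`, `z ∈ V`
and `α ∈ (0,1)`, with `q = ⌈(k-1)/α⌉` there exists `ρ₁ ∈ [0,1)` satisfying both
volume bounds for `c^q(∂(ρ₁))`. -/
theorem stmt_8 [Fintype V] [DecidableEq V] (G : SimpleGraph V) [DecidableRel G.Adj]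
    (c x y : Sym2 V → ℝ) (F H : Finset (Sym2 V))
    (hc : ∀ e, 0 ≤ c e) (hx : ∀ e, 0 ≤ x e) (hy : ∀ e, 0 ≤ y e)
    (hFE : F ⊆ G.edgeFinset) (hHE : H ⊆ G.edgeFinset) (hFH : Disjoint F H)
    (hxF : ∀ e ∉ F, x e = 0) (hyH : ∀ e ∉ H, y e = 0)
    (k r : ℕ) (hk : 2 ≤ k) (hr : 1 ≤ r)
    (hysum : ∑ e ∈ G.edgeFinset, y e ≤ (k : ℝ) - 1)
    (ℓ : V → V → ℝ)
    (hle : ∀ u v, ∀ p : G.Walk u v, ℓ u v ≤ (p.edges.map fun e => x e + y e).sum)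
    (hattain : ∀ u v, G.Reachable u v →
      ∃ p : G.Walk u v, ℓ u v = (p.edges.map fun e => x e + y e).sum)
    (hfar : ∀ u v, ¬ G.Reachable u v → 1 < ℓ u v)
    (β : ℝ) (hβ : β = (∑ e ∈ G.edgeFinset, c e * x e) / r) (hβpos : 0 < β)
    (S : Finset V) (z : V) (α : ℝ) (hα0 : 0 < α) (hα1 : α < 1) :
    ∃ ρ₁ ∈ Set.Ico (0 : ℝ) 1,
      (cq c ⌈((k : ℝ) - 1) / α⌉₊ (bdry G (ℓ z) S ρ₁) ≤
        2 / (1 - α) * vol G c ℓ F S z β ρ₁ *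
          Real.log (Real.exp 1 * Vx G c x S β / vol G c ℓ F S z β ρ₁) *
          Real.log (Real.log (Real.exp 1 * (r + 1)))) ∧
      (cq c ⌈((k : ℝ) - 1) / α⌉₊ (bdry G (ℓ z) S ρ₁) ≤
        2 / (1 - α) * cvol G c ℓ F S z β ρ₁ *
          Real.log (Real.exp 1 * Vx G c x S β / cvol G c ℓ F S z β ρ₁) *
          Real.log (Real.log (Real.exp 1 * (r + 1)))) := by
  classical
  -- numeric setup
  have hk1 : (1:ℝ) ≤ (k:ℝ) - 1 := by
    have h2k : (2:ℝ) ≤ (k:ℝ) := by exact_mod_cast hk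
    linarith
  have hq0 : 0 < ⌈((k : ℝ) - 1) / α⌉₊ := Nat.ceil_pos.2 (div_pos (by linarith) hα0)
  have hqge : ((k:ℝ) - 1) / α ≤ (⌈((k : ℝ) - 1) / α⌉₊ : ℝ) := Nat.le_ceil _
  have hr1 : (1:ℝ) ≤ (r:ℝ) := by exact_mod_cast hr
  -- metric facts
  have hev : ∀ e, 0 ≤ elen ℓ e := elen_nonneg hx hy hattain hfar
  have hdmin0 : ∀ e, 0 ≤ dmin (ℓ z) e := dmin_nonneg hx hy hattain hfar z
  have hdmax0 : ∀ e, 0 ≤ dmax (ℓ z) e := dmax_nonneg hx hy hattain hfar z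
  have hlip : ∀ e ∈ G.edgeFinset, dmin (ℓ z) e ≤ 1 → dmax (ℓ z) e ≤ dmin (ℓ z) e + elen ℓ e :=
    fun e he h1 => dmax_le_dmin_add_elen hle hattain hfar z (SimpleGraph.mem_edgeFinset.1 he) h1
  have hevxy : ∀ e ∈ G.edgeFinset, elen ℓ e ≤ x e + y e :=
    fun e he => elen_le_xy hle hattain (SimpleGraph.mem_edgeFinset.1 he)
  have hevxF : ∀ e ∈ F, elen ℓ e ≤ x e := by
    intro e heF
    have hy0 : y e = 0 := hyH e (Finset.disjoint_left.1 hFH heF)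
    have h2 := hevxy e (hFE heF)
    linarith
  -- bounds on Vx
  have hβW : β ≤ Vx G c x S β := by
    rw [Vx]
    have h2 : (0:ℝ) ≤ ∑ e ∈ G.edgeFinset.filter (fun e => ∀ w ∈ e, w ∈ S), c e * x e :=
      Finset.sum_nonneg (fun e _ => mul_nonneg (hc e) (hx e))
    linarith
  have hW0 : 0 < Vx G c x S β := lt_of_lt_of_le hβpos hβW
  have hWr : Vx G c x S β ≤ ((r:ℝ) + 1) * β := by
    rw [Vx]
    have h1 : ∑ e ∈ G.edgeFinset.filter (fun e => ∀ w ∈ e, w ∈ S), c e * x e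
        ≤ ∑ e ∈ G.edgeFinset, c e * x e :=
      Finset.sum_le_sum_of_subset_of_nonneg (Finset.filter_subset _ _)
        (fun e _ _ => mul_nonneg (hc e) (hx e))
    have h2 : ∑ e ∈ G.edgeFinset, c e * x e = (r:ℝ) * β := by
      rw [hβ]
      field_simp
    linarith
  -- positivity of the log-log factor and of `a`
  have hL1 : 1 < Real.log (Real.exp 1 * ((r:ℝ) + 1)) := by
    rw [Real.log_mul (ne_of_gt (Real.exp_pos 1)) (by linarith), Real.log_exp]
    have h2 : 0 < Real.log ((r:ℝ) + 1) := Real.log_pos (by linarith)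
    linarith
  have hL0 : 0 < Real.log (Real.log (Real.exp 1 * ((r:ℝ) + 1))) := Real.log_pos hL1
  have ha0 : 0 < 2 / (1 - α) * Real.log (Real.log (Real.exp 1 * ((r:ℝ) + 1))) :=
    mul_pos (div_pos two_pos (by linarith)) hL0
  have hGfβ : Gf (Vx G c x S β) β ≤ Real.log (Real.log (Real.exp 1 * ((r:ℝ) + 1))) := by
    rw [Gf]
    have h1 : 1 ≤ Real.log (Real.exp 1 * Vx G c x S β / β) := log_ge_one hβpos hβW
    apply Real.log_le_log (by linarith)
    apply Real.log_le_log (by positivity)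
    rw [div_le_iff₀ hβpos]
    nlinarith [mul_le_mul_of_nonneg_left hWr (Real.exp_pos 1).le]
  -- breakpoints
  set P : Finset ℝ := insert 0 (insert 1 (((G.edgeFinset.image (dmin (ℓ z))
      ∪ G.edgeFinset.image (dmax (ℓ z)))).filter (fun t => t ≤ 1))) with hPdef
  have h0P : (0:ℝ) ∈ P := Finset.mem_insert_self _ _
  have h1P : (1:ℝ) ∈ P := Finset.mem_insert_of_mem (Finset.mem_insert_self _ _)
  have hP0 : ∀ p ∈ P, 0 ≤ p := by
    intro p hp
    rw [hPdef, Finset.mem_insert, Finset.mem_insert] at hp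
    rcases hp with rfl | rfl | hp
    · exact le_rfl
    · exact zero_le_one
    · obtain ⟨hp2, -⟩ := Finset.mem_filter.1 hp
      rcases Finset.mem_union.1 hp2 with h | h <;> obtain ⟨e, -, rfl⟩ := Finset.mem_image.1 h
      exacts [hdmin0 e, hdmax0 e]
  have hP1 : ∀ p ∈ P, p ≤ 1 := by
    intro p hp
    rw [hPdef, Finset.mem_insert, Finset.mem_insert] at hp
    rcases hp with rfl | rfl | hp
    · exact zero_le_one
    · exact le_rfl
    · exact (Finset.mem_filter.1 hp).2
  have hdminP : ∀ e ∈ G.edgeFinset, dmin (ℓ z) e ≤ 1 → dmin (ℓ z) e ∈ P := by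
    intro e he h1
    rw [hPdef]
    exact Finset.mem_insert_of_mem (Finset.mem_insert_of_mem (Finset.mem_filter.2
      ⟨Finset.mem_union_left _ (Finset.mem_image_of_mem _ he), h1⟩))
  have hdmaxP : ∀ e ∈ G.edgeFinset, dmax (ℓ z) e ≤ 1 → dmax (ℓ z) e ∈ P := by
    intro e he h1
    rw [hPdef]
    exact Finset.mem_insert_of_mem (Finset.mem_insert_of_mem (Finset.mem_filter.2
      ⟨Finset.mem_union_right _ (Finset.mem_image_of_mem _ he), h1⟩))
  obtain ⟨n, hn⟩ : ∃ n, n = P.card := ⟨_, rfl⟩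
  have h2n : 2 ≤ n := by
    have hsub : ({0, 1} : Finset ℝ) ⊆ P := by
      intro p hp
      rcases Finset.mem_insert.1 hp with rfl | hp
      · exact h0P
      · rw [Finset.mem_singleton] at hp
        subst hp
        exact h1P
    have hcard2 : ({0, 1} : Finset ℝ).card = 2 := by norm_num
    rw [hn, ← hcard2]
    exact Finset.card_le_card hsub
  obtain ⟨T, hTdef⟩ : ∃ T : ℕ → ℝ,
      T = fun j => if h : j < n then ((P.orderIsoOfFin hn.symm ⟨j, h⟩ : {t // t ∈ P}) : ℝ) else 1 :=
    ⟨_, rfl⟩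
  have hTmem : ∀ j, j < n → T j ∈ P := by
    intro j h
    rw [hTdef]
    simp only [dif_pos h]
    exact (P.orderIsoOfFin hn.symm ⟨j, h⟩).2
  have hTle : ∀ i j, i < n → j < n → i ≤ j → T i ≤ T j := by
    intro i j hi hj hij
    rw [hTdef]
    simp only [dif_pos hi, dif_pos hj]
    exact Subtype.coe_le_coe.2 ((P.orderIsoOfFin hn.symm).monotone
      (show (⟨i, hi⟩ : Fin n) ≤ ⟨j, hj⟩ from hij))
  have hTlt : ∀ i j, i < n → j < n → i < j → T i < T j := by
    intro i j hi hj hij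
    rw [hTdef]
    simp only [dif_pos hi, dif_pos hj]
    exact Subtype.coe_lt_coe.2 ((P.orderIsoOfFin hn.symm).strictMono
      (show (⟨i, hi⟩ : Fin n) < ⟨j, hj⟩ from hij))
  have hTsurj : ∀ p ∈ P, ∃ j, j < n ∧ T j = p := by
    intro p hp
    obtain ⟨⟨i, hi⟩, hmap⟩ := (P.orderIsoOfFin hn.symm).surjective ⟨p, hp⟩
    refine ⟨i, hi, ?_⟩
    rw [hTdef]
    simp only [dif_pos hi]
    rw [hmap]
  have hT0 : T 0 = 0 := by
    obtain ⟨j, hjn, hj⟩ := hTsurj 0 h0P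
    have h1 : T 0 ≤ T j := hTle 0 j (by omega) hjn (by omega)
    have h2 : 0 ≤ T 0 := hP0 _ (hTmem 0 (by omega))
    linarith
  have hTlast : T (n - 1) = 1 := by
    obtain ⟨j, hjn, hj⟩ := hTsurj 1 h1P
    have h1 : T j ≤ T (n - 1) := hTle j (n - 1) hjn (by omega) (by omega)
    have h2 : T (n - 1) ≤ 1 := hP1 _ (hTmem (n - 1) (by omega))
    linarith
  have hTgap : ∀ j, j + 1 < n → ∀ p ∈ P, T j < p → T (j + 1) ≤ p := by
    intro j hj p hp hlt
    obtain ⟨i, hin, rfl⟩ := hTsurj p hp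
    by_contra hcon2
    push_neg at hcon2
    rcases le_or_gt i j with h | h
    · exact absurd (hTle i j hin (by omega) h) (not_le.2 hlt)
    · exact absurd (hTle (j + 1) i (by omega) hin (by omega)) (not_le.2 hcon2)
  have hT1 : ∀ j, j < n → T j ≤ 1 := fun j hj => hP1 _ (hTmem j hj)
  have hT0' : ∀ j, j < n → 0 ≤ T j := fun j hj => hP0 _ (hTmem j hj)
  -- boundary membership helper
  have hmemb : ∀ (ρ : ℝ) (e : Sym2 V), e ∈ bdry G (ℓ z) S ρ ↔
      e ∈ G.edgeFinset ∧ (∀ w ∈ e, w ∈ S) ∧ dmin (ℓ z) e ≤ ρ ∧ ρ < dmax (ℓ z) e := by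
    intro ρ e
    simp only [bdry, Finset.mem_filter]
  -- constancy of the boundary on the pieces
  have hF2 : ∀ j, j + 1 < n → ∀ e ∈ G.edgeFinset, T j < dmax (ℓ z) e →
      T (j + 1) ≤ dmax (ℓ z) e := by
    intro j hj e he h
    rcases le_or_gt (dmax (ℓ z) e) 1 with hd1 | hd1
    · exact hTgap j hj _ (hdmaxP e he hd1) h
    · linarith [hT1 (j + 1) hj]
  have hbdry_const : ∀ j, j + 1 < n → ∀ ρ, T j ≤ ρ → ρ < T (j + 1) →
      bdry G (ℓ z) S ρ = bdry G (ℓ z) S (T j) := by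
    intro j hj ρ h1 h2
    have hu1 : T (j + 1) ≤ 1 := hT1 _ hj
    simp only [bdry]
    apply Finset.filter_congr
    intro e he
    have hmineq : dmin (ℓ z) e ≤ ρ ↔ dmin (ℓ z) e ≤ T j := by
      constructor
      · intro h
        by_contra hcon2
        push_neg at hcon2
        have hple : dmin (ℓ z) e ≤ 1 := by linarith
        have := hTgap j hj _ (hdminP e he hple) hcon2
        linarith
      · intro h
        linarith
    have hmaxeq : ρ < dmax (ℓ z) e ↔ T j < dmax (ℓ z) e := by
      constructor
      · intro h
        linarith
      · intro h
        have := hF2 j hj e he h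
        linarith
    rw [hmineq, hmaxeq]
  -- the boundary F-part is inside FS, and crosses the whole piece
  have hBdF_sub : ∀ (ρ : ℝ), (bdry G (ℓ z) S ρ) ∩ F ⊆ F.filter (fun e => ∀ w ∈ e, w ∈ S) := by
    intro ρ e he
    obtain ⟨he1, he2⟩ := Finset.mem_inter.1 he
    obtain ⟨-, hS, -, -⟩ := (hmemb ρ e).1 he1
    exact Finset.mem_filter.2 ⟨he2, hS⟩
  -- main contradiction
  by_contra hcon
  push_neg at hcon
  have hcov_pt : ∀ ρ ∈ Set.Ico (0:ℝ) 1,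
      2 / (1 - α) * vol G c ℓ F S z β ρ *
          Real.log (Real.exp 1 * Vx G c x S β / vol G c ℓ F S z β ρ) *
          Real.log (Real.log (Real.exp 1 * (r + 1))) < cq c ⌈((k : ℝ) - 1) / α⌉₊ (bdry G (ℓ z) S ρ) ∨
      2 / (1 - α) * cvol G c ℓ F S z β ρ *
          Real.log (Real.exp 1 * Vx G c x S β / cvol G c ℓ F S z β ρ) *
          Real.log (Real.log (Real.exp 1 * (r + 1))) < cq c ⌈((k : ℝ) - 1) / α⌉₊ (bdry G (ℓ z) S ρ) := by
    intro ρ hρ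
    rcases le_or_gt (cq c ⌈((k : ℝ) - 1) / α⌉₊ (bdry G (ℓ z) S ρ))
      (2 / (1 - α) * vol G c ℓ F S z β ρ *
        Real.log (Real.exp 1 * Vx G c x S β / vol G c ℓ F S z β ρ) *
        Real.log (Real.log (Real.exp 1 * (r + 1)))) with h | h
    · exact Or.inr (hcon ρ hρ h)
    · exact Or.inl h
  -- per-piece estimate
  have hpiece : ∀ j, j + 1 < n →
      ¬ (⌈((k : ℝ) - 1) / α⌉₊ ≤ ((bdry G (ℓ z) S (T j)) ∩ H).card) →
      2 / (1 - α) * Real.log (Real.log (Real.exp 1 * ((r:ℝ) + 1))) * (T (j + 1) - T j) <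
        (Gf (Vx G c x S β) (vol G c ℓ F S z β (T j)) -
          Gf (Vx G c x S β) (vol G c ℓ F S z β (T (j + 1)))) +
        (Gf (Vx G c x S β) (cvol G c ℓ F S z β (T (j + 1))) -
          Gf (Vx G c x S β) (cvol G c ℓ F S z β (T j))) := by
    intro j hjn hHok
    have ht0 : 0 ≤ T j := hT0' j (by omega)
    have hu1 : T (j + 1) ≤ 1 := hT1 _ hjn
    have htu : T j < T (j + 1) := hTlt j (j + 1) (by omega) hjn (by omega)
    -- the boundary at the left end of the piece, intersected with F
    have hcross : ∀ e ∈ (bdry G (ℓ z) S (T j)) ∩ F,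
        dmin (ℓ z) e ≤ T j ∧ T (j + 1) ≤ dmax (ℓ z) e := by
      intro e he
      obtain ⟨he1, -⟩ := Finset.mem_inter.1 he
      obtain ⟨heE, -, h3, h4⟩ := (hmemb _ e).1 he1
      exact ⟨h3, hF2 j hjn e heE h4⟩
    -- c^q at the boundary is at most the F-part cost
    have hcqle : cq c ⌈((k : ℝ) - 1) / α⌉₊ (bdry G (ℓ z) S (T j)) ≤
        ∑ e ∈ (bdry G (ℓ z) S (T j)) ∩ F, c e := by
      apply cq_le_sum (H := H) hc
      · intro e he
        obtain ⟨heE, -, h3, h4⟩ := (hmemb _ e).1 he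
        by_contra hcon2
        push_neg at hcon2
        have hx0 : x e = 0 := hxF e hcon2.1
        have hy0 : y e = 0 := hyH e hcon2.2
        have h5 := hlip e heE (by linarith [hT1 j (by omega)])
        have h6 := hevxy e heE
        linarith
      · omega
    -- apply the abstract piece lemma
    apply piece_lemma (vol G c ℓ F S z β) (cvol G c ℓ F S z β) hβpos ha0 htu
    · intro ρ σ h1 h2 h3
      exact vol_mono hFE hc hev hlip h2 (le_trans h3 hu1)
    · intro ρ σ h1 h2 h3
      exact cvol_anti hFE hc hev hlip h2 (le_trans h3 hu1)
    · intro ρ σ h1 h2 h3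
      apply vol_lb hFE hc hev hlip (hBdF_sub (T j)) h2 (le_trans h3.le hu1)
      intro e he
      obtain ⟨hm1, hm2⟩ := hcross e he
      exact ⟨le_trans hm1 h1, lt_of_lt_of_le h3 hm2⟩
    · intro ρ σ h1 h2 h3
      rcases eq_or_lt_of_le h2 with rfl | hlt2
      · simp
      · apply cvol_lb hFE hc hev hlip (hBdF_sub (T j)) h2 (le_trans h3 hu1)
        intro e he
        obtain ⟨hm1, hm2⟩ := hcross e he
        exact ⟨le_trans hm1 h1, le_trans h3 hm2, lt_of_lt_of_le hlt2 (le_trans h3 hm2)⟩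
    · intro ρ h1 h2
      exact beta_le_vol hFE hc hev ρ
    · intro ρ h1 h2
      exact vol_le_Vx hFE hc hx hlip hevxF (le_trans h2 hu1)
    · intro ρ h1 h2
      exact beta_le_cvol hFE hc hev ρ
    · intro ρ h1 h2
      exact cvol_le_Vx hFE hc hx hlip hevxF (le_trans h2 hu1)
    · -- coverage
      intro ρ h1 h2
      have hρIco : ρ ∈ Set.Ico (0:ℝ) 1 := ⟨le_trans ht0 h1, lt_of_lt_of_le h2 hu1⟩
      have hbd : bdry G (ℓ z) S ρ = bdry G (ℓ z) S (T j) := hbdry_const j hjn ρ h1 h2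
      rcases hcov_pt ρ hρIco with h' | h'
      · left
        rw [hbd] at h'
        have heq : 2 / (1 - α) * Real.log (Real.log (Real.exp 1 * ((r:ℝ) + 1))) *
            hf (Vx G c x S β) (vol G c ℓ F S z β ρ)
            = 2 / (1 - α) * vol G c ℓ F S z β ρ *
              Real.log (Real.exp 1 * Vx G c x S β / vol G c ℓ F S z β ρ) *
              Real.log (Real.log (Real.exp 1 * ((r:ℝ) + 1))) := by
          rw [hf]
          ring
        rw [heq]
        exact lt_of_lt_of_le h' hcqle
      · right
        rw [hbd] at h'
        have heq : 2 / (1 - α) * Real.log (Real.log (Real.exp 1 * ((r:ℝ) + 1))) *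
            hf (Vx G c x S β) (cvol G c ℓ F S z β ρ)
            = 2 / (1 - α) * cvol G c ℓ F S z β ρ *
              Real.log (Real.exp 1 * Vx G c x S β / cvol G c ℓ F S z β ρ) *
              Real.log (Real.log (Real.exp 1 * ((r:ℝ) + 1))) := by
          rw [hf]
          ring
        rw [heq]
        exact lt_of_lt_of_le h' hcqle

  -- total length of the pieces
  have hΔsum : ∑ j ∈ Finset.range (n - 1), (T (j + 1) - T j) = 1 := by
    rw [Finset.sum_range_sub (f := T) (n := n - 1)]
    rw [hT0, hTlast]
    ring
  -- bound on the measure of the H-bad pieces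
  have hHsum : ∑ j ∈ (Finset.range (n - 1)).filter
        (fun j => ⌈((k : ℝ) - 1) / α⌉₊ ≤ ((bdry G (ℓ z) S (T j)) ∩ H).card),
      (T (j + 1) - T j) ≤ α := by
    have hΔ0 : ∀ j ∈ Finset.range (n - 1), 0 ≤ T (j + 1) - T j := by
      intro j hj
      rw [Finset.mem_range] at hj
      have := hTlt j (j + 1) (by omega) (by omega) (by omega)
      linarith
    have step1 : (⌈((k : ℝ) - 1) / α⌉₊ : ℝ) * ∑ j ∈ (Finset.range (n - 1)).filter
          (fun j => ⌈((k : ℝ) - 1) / α⌉₊ ≤ ((bdry G (ℓ z) S (T j)) ∩ H).card),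
        (T (j + 1) - T j)
        ≤ ∑ j ∈ Finset.range (n - 1),
            (((bdry G (ℓ z) S (T j)) ∩ H).card : ℝ) * (T (j + 1) - T j) := by
      rw [Finset.mul_sum]
      refine le_trans (Finset.sum_le_sum ?_)
        (Finset.sum_le_sum_of_subset_of_nonneg (Finset.filter_subset _ _) ?_)
      · intro j hj
        obtain ⟨hjr, hjq⟩ := Finset.mem_filter.1 hj
        have hq2 : (⌈((k : ℝ) - 1) / α⌉₊ : ℝ) ≤ (((bdry G (ℓ z) S (T j)) ∩ H).card : ℝ) := by
          exact_mod_cast hjq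
        exact mul_le_mul_of_nonneg_right hq2 (hΔ0 j hjr)
      · intro j hj _
        exact mul_nonneg (Nat.cast_nonneg _) (hΔ0 j hj)
    have step2 : ∑ j ∈ Finset.range (n - 1),
          (((bdry G (ℓ z) S (T j)) ∩ H).card : ℝ) * (T (j + 1) - T j)
        = ∑ e ∈ H, ∑ j ∈ (Finset.range (n - 1)).filter
            (fun j => e ∈ bdry G (ℓ z) S (T j)), (T (j + 1) - T j) := by
      have hcardeq : ∀ j, (((bdry G (ℓ z) S (T j)) ∩ H).card : ℝ)
          = ∑ e ∈ H, if e ∈ bdry G (ℓ z) S (T j) then (1:ℝ) else 0 := by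
        intro j
        rw [Finset.inter_comm, ← Finset.filter_mem_eq_inter, Finset.card_filter]
        push_cast
        rfl
      calc ∑ j ∈ Finset.range (n - 1),
            (((bdry G (ℓ z) S (T j)) ∩ H).card : ℝ) * (T (j + 1) - T j)
          = ∑ j ∈ Finset.range (n - 1), ∑ e ∈ H,
              (if e ∈ bdry G (ℓ z) S (T j) then (1:ℝ) else 0) * (T (j + 1) - T j) := by
            apply Finset.sum_congr rfl
            intro j hj
            rw [hcardeq j, Finset.sum_mul]
        _ = ∑ e ∈ H, ∑ j ∈ Finset.range (n - 1),
              (if e ∈ bdry G (ℓ z) S (T j) then (1:ℝ) else 0) * (T (j + 1) - T j) :=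
            Finset.sum_comm
        _ = ∑ e ∈ H, ∑ j ∈ (Finset.range (n - 1)).filter
              (fun j => e ∈ bdry G (ℓ z) S (T j)), (T (j + 1) - T j) := by
            apply Finset.sum_congr rfl
            intro e _
            rw [Finset.sum_filter]
            apply Finset.sum_congr rfl
            intro j _
            split_ifs <;> ring
    have step3 : ∀ e ∈ H, ∑ j ∈ (Finset.range (n - 1)).filter
        (fun j => e ∈ bdry G (ℓ z) S (T j)), (T (j + 1) - T j) ≤ y e := by
      intro e heH
      rcases Finset.eq_empty_or_nonempty ((Finset.range (n - 1)).filter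
        (fun j => e ∈ bdry G (ℓ z) S (T j))) with hJ | hJ
      · rw [hJ]
        simpa using hy e
      · set J := (Finset.range (n - 1)).filter (fun j => e ∈ bdry G (ℓ z) S (T j)) with hJdef
        have hj0J : J.min' hJ ∈ J := Finset.min'_mem _ _
        have hj1J : J.max' hJ ∈ J := Finset.max'_mem _ _
        obtain ⟨hj0r, hj0b⟩ := Finset.mem_filter.1 hj0J
        obtain ⟨hj1r, hj1b⟩ := Finset.mem_filter.1 hj1J
        rw [Finset.mem_range] at hj0r hj1r
        obtain ⟨heE, -, hdm0, -⟩ := (hmemb _ e).1 hj0b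
        obtain ⟨-, -, -, hdx1⟩ := (hmemb _ e).1 hj1b
        have hsubJ : J ⊆ Finset.Icc (J.min' hJ) (J.max' hJ) :=
          fun j hj => Finset.mem_Icc.2 ⟨Finset.min'_le _ _ hj, Finset.le_max' _ _ hj⟩
        have h1 : ∑ j ∈ J, (T (j + 1) - T j)
            ≤ ∑ j ∈ Finset.Icc (J.min' hJ) (J.max' hJ), (T (j + 1) - T j) := by
          apply Finset.sum_le_sum_of_subset_of_nonneg hsubJ
          intro j hj _
          rw [Finset.mem_Icc] at hj
          have hjr : j < n - 1 := by omega
          have := hTlt j (j + 1) (by omega) (by omega) (by omega)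
          linarith
        have h2 : ∑ j ∈ Finset.Icc (J.min' hJ) (J.max' hJ), (T (j + 1) - T j)
            = T (J.max' hJ + 1) - T (J.min' hJ) :=
          sum_Icc_telescope T (Finset.min'_le _ _ hj1J)
        have h3 : T (J.max' hJ + 1) ≤ dmax (ℓ z) e := hF2 _ (by omega) e heE hdx1
        have h4 : dmax (ℓ z) e ≤ dmin (ℓ z) e + elen ℓ e :=
          hlip e heE (le_trans hdm0 (hT1 _ (by omega)))
        have h5 := hevxy e heE
        have h6 : x e = 0 := hxF e (Finset.disjoint_right.1 hFH heH)
        linarith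
    have hHsub : ∑ e ∈ H, y e ≤ ∑ e ∈ G.edgeFinset, y e :=
      Finset.sum_le_sum_of_subset_of_nonneg hHE (fun e _ _ => hy e)
    have hfinal : (⌈((k : ℝ) - 1) / α⌉₊ : ℝ) * ∑ j ∈ (Finset.range (n - 1)).filter
          (fun j => ⌈((k : ℝ) - 1) / α⌉₊ ≤ ((bdry G (ℓ z) S (T j)) ∩ H).card)
          , (T (j + 1) - T j) ≤ (k:ℝ) - 1 := by
      have hstep3 : ∑ e ∈ H, ∑ j ∈ (Finset.range (n - 1)).filter
          (fun j => e ∈ bdry G (ℓ z) S (T j)), (T (j + 1) - T j) ≤ ∑ e ∈ H, y e :=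
        Finset.sum_le_sum step3
      rw [← step2] at hstep3
      linarith [step1, hstep3, hHsub, hysum]
    have hq0' : (0:ℝ) < (⌈((k : ℝ) - 1) / α⌉₊ : ℝ) := by exact_mod_cast hq0
    have hkq : (k:ℝ) - 1 ≤ (⌈((k : ℝ) - 1) / α⌉₊ : ℝ) * α := by
      rw [div_le_iff₀ hα0] at hqge
      linarith
    have := le_trans hfinal hkq
    exact le_of_mul_le_mul_left (by linarith) hq0'
  -- telescoping bound on the potentials
  have hMsum : ∑ j ∈ Finset.range (n - 1),
      ((Gf (Vx G c x S β) (vol G c ℓ F S z β (T j)) -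
        Gf (Vx G c x S β) (vol G c ℓ F S z β (T (j + 1)))) +
      (Gf (Vx G c x S β) (cvol G c ℓ F S z β (T (j + 1))) -
        Gf (Vx G c x S β) (cvol G c ℓ F S z β (T j))))
      ≤ 2 * Real.log (Real.log (Real.exp 1 * ((r:ℝ) + 1))) := by
    rw [Finset.sum_add_distrib]
    have t1 : ∑ j ∈ Finset.range (n - 1),
        (Gf (Vx G c x S β) (vol G c ℓ F S z β (T j)) -
          Gf (Vx G c x S β) (vol G c ℓ F S z β (T (j + 1))))
        = Gf (Vx G c x S β) (vol G c ℓ F S z β (T 0)) -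
          Gf (Vx G c x S β) (vol G c ℓ F S z β (T (n - 1))) :=
      Finset.sum_range_sub' (fun j => Gf (Vx G c x S β) (vol G c ℓ F S z β (T j))) (n - 1)
    have t2 : ∑ j ∈ Finset.range (n - 1),
        (Gf (Vx G c x S β) (cvol G c ℓ F S z β (T (j + 1))) -
          Gf (Vx G c x S β) (cvol G c ℓ F S z β (T j)))
        = Gf (Vx G c x S β) (cvol G c ℓ F S z β (T (n - 1))) -
          Gf (Vx G c x S β) (cvol G c ℓ F S z β (T 0)) :=
      Finset.sum_range_sub (fun j => Gf (Vx G c x S β) (cvol G c ℓ F S z β (T j))) (n - 1)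
    have b1 : Gf (Vx G c x S β) (vol G c ℓ F S z β (T 0)) ≤
        Real.log (Real.log (Real.exp 1 * ((r:ℝ) + 1))) := by
      refine le_trans (Gf_anti hβpos (beta_le_vol hFE hc hev (T 0)) ?_) hGfβ
      exact vol_le_Vx hFE hc hx hlip hevxF (hT1 0 (by omega))
    have b2 : 0 ≤ Gf (Vx G c x S β) (vol G c ℓ F S z β (T (n - 1))) := by
      apply Gf_nonneg
      · exact lt_of_lt_of_le hβpos (beta_le_vol hFE hc hev _)
      · exact vol_le_Vx hFE hc hx hlip hevxF (hT1 (n - 1) (by omega))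
    have b3 : Gf (Vx G c x S β) (cvol G c ℓ F S z β (T (n - 1))) ≤
        Real.log (Real.log (Real.exp 1 * ((r:ℝ) + 1))) := by
      refine le_trans (Gf_anti hβpos (beta_le_cvol hFE hc hev (T (n - 1))) ?_) hGfβ
      exact cvol_le_Vx hFE hc hx hlip hevxF (hT1 (n - 1) (by omega))
    have b4 : 0 ≤ Gf (Vx G c x S β) (cvol G c ℓ F S z β (T 0)) := by
      apply Gf_nonneg
      · exact lt_of_lt_of_le hβpos (beta_le_cvol hFE hc hev _)
      · exact cvol_le_Vx hFE hc hx hlip hevxF (hT1 0 (by omega))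
    rw [t1, t2]
    linarith
  -- assemble
  have hsplit := Finset.sum_filter_add_sum_filter_not (Finset.range (n - 1))
    (fun j => ⌈((k : ℝ) - 1) / α⌉₊ ≤ ((bdry G (ℓ z) S (T j)) ∩ H).card)
    (fun j => T (j + 1) - T j)
  rcases Finset.eq_empty_or_nonempty ((Finset.range (n - 1)).filter
      (fun j => ¬ ⌈((k : ℝ) - 1) / α⌉₊ ≤ ((bdry G (ℓ z) S (T j)) ∩ H).card)) with hreg | hreg
  · rw [hreg, Finset.sum_empty] at hsplit
    rw [← hsplit] at hΔsum
    linarith [hHsum, hΔsum]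
  · have hlt : (2 / (1 - α) * Real.log (Real.log (Real.exp 1 * ((r:ℝ) + 1)))) *
        ∑ j ∈ (Finset.range (n - 1)).filter
          (fun j => ¬ ⌈((k : ℝ) - 1) / α⌉₊ ≤ ((bdry G (ℓ z) S (T j)) ∩ H).card),
          (T (j + 1) - T j)
        < ∑ j ∈ (Finset.range (n - 1)).filter
          (fun j => ¬ ⌈((k : ℝ) - 1) / α⌉₊ ≤ ((bdry G (ℓ z) S (T j)) ∩ H).card),
          ((Gf (Vx G c x S β) (vol G c ℓ F S z β (T j)) -
            Gf (Vx G c x S β) (vol G c ℓ F S z β (T (j + 1)))) +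
          (Gf (Vx G c x S β) (cvol G c ℓ F S z β (T (j + 1))) -
            Gf (Vx G c x S β) (cvol G c ℓ F S z β (T j)))) := by
      rw [Finset.mul_sum]
      apply Finset.sum_lt_sum_of_nonempty hreg
      intro j hj
      obtain ⟨hjr, hjq⟩ := Finset.mem_filter.1 hj
      rw [Finset.mem_range] at hjr
      exact hpiece j (by omega) hjq
    have hMrest : ∑ j ∈ (Finset.range (n - 1)).filter
          (fun j => ¬ ⌈((k : ℝ) - 1) / α⌉₊ ≤ ((bdry G (ℓ z) S (T j)) ∩ H).card),
          ((Gf (Vx G c x S β) (vol G c ℓ F S z β (T j)) -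
            Gf (Vx G c x S β) (vol G c ℓ F S z β (T (j + 1)))) +
          (Gf (Vx G c x S β) (cvol G c ℓ F S z β (T (j + 1))) -
            Gf (Vx G c x S β) (cvol G c ℓ F S z β (T j))))
        ≤ ∑ j ∈ Finset.range (n - 1),
          ((Gf (Vx G c x S β) (vol G c ℓ F S z β (T j)) -
            Gf (Vx G c x S β) (vol G c ℓ F S z β (T (j + 1)))) +
          (Gf (Vx G c x S β) (cvol G c ℓ F S z β (T (j + 1))) -
            Gf (Vx G c x S β) (cvol G c ℓ F S z β (T j)))) := by
      apply Finset.sum_le_sum_of_subset_of_nonneg (Finset.filter_subset _ _)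
      intro j hj _
      rw [Finset.mem_range] at hj
      have ht0 : 0 ≤ T j := hT0' j (by omega)
      have hu1 : T (j + 1) ≤ 1 := hT1 _ (by omega)
      have htu : T j ≤ T (j + 1) := (hTlt j (j + 1) (by omega) (by omega) (by omega)).le
      have m1 : Gf (Vx G c x S β) (vol G c ℓ F S z β (T (j + 1))) ≤
          Gf (Vx G c x S β) (vol G c ℓ F S z β (T j)) := by
        apply Gf_anti (lt_of_lt_of_le hβpos (beta_le_vol hFE hc hev _))
        · exact vol_mono hFE hc hev hlip htu hu1
        · exact vol_le_Vx hFE hc hx hlip hevxF hu1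
      have m2 : Gf (Vx G c x S β) (cvol G c ℓ F S z β (T j)) ≤
          Gf (Vx G c x S β) (cvol G c ℓ F S z β (T (j + 1))) := by
        apply Gf_anti (lt_of_lt_of_le hβpos (beta_le_cvol hFE hc hev _))
        · exact cvol_anti hFE hc hev hlip htu hu1
        · exact cvol_le_Vx hFE hc hx hlip hevxF (le_trans htu hu1)
      linarith
    -- final numeric contradiction
    have hregsum : 1 - α ≤ ∑ j ∈ (Finset.range (n - 1)).filter
        (fun j => ¬ ⌈((k : ℝ) - 1) / α⌉₊ ≤ ((bdry G (ℓ z) S (T j)) ∩ H).card),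
        (T (j + 1) - T j) := by
      linarith [hHsum, hsplit, hΔsum]
    have hfin1 : (2 / (1 - α) * Real.log (Real.log (Real.exp 1 * ((r:ℝ) + 1)))) * (1 - α)
        < 2 * Real.log (Real.log (Real.exp 1 * ((r:ℝ) + 1))) := by
      calc (2 / (1 - α) * Real.log (Real.log (Real.exp 1 * ((r:ℝ) + 1)))) * (1 - α)
          ≤ (2 / (1 - α) * Real.log (Real.log (Real.exp 1 * ((r:ℝ) + 1)))) *
            ∑ j ∈ (Finset.range (n - 1)).filter
              (fun j => ¬ ⌈((k : ℝ) - 1) / α⌉₊ ≤ ((bdry G (ℓ z) S (T j)) ∩ H).card),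
              (T (j + 1) - T j) := by
            exact mul_le_mul_of_nonneg_left hregsum ha0.le
        _ < _ := lt_of_lt_of_le hlt (le_trans hMrest hMsum)
    have heqa : (2 / (1 - α) * Real.log (Real.log (Real.exp 1 * ((r:ℝ) + 1)))) * (1 - α)
        = 2 * Real.log (Real.log (Real.exp 1 * ((r:ℝ) + 1))) := by
      have hne : (1:ℝ) - α ≠ 0 := ne_of_gt (by linarith)
      field_simp
    rw [heqa] at hfin1
    exact lt_irrefl _ hfin1


end SubdividedLP
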